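/- arXiv:2106.09767 — 6 statements merged into one kernel-verified Lean document; each statement's English description precedes it below -/
import Mathlib

section
/- Let (F,v) be a valued field of equal characteristic (char F = char Fv) with value group Γ, let q be a prime number, and let t ∈ F be such that the q cosets qΓ, qΓ + v(t), qΓ + 2v(t), …, qΓ + (q−1)v(t) are pairwise distinct in Γ. Assume F contains a primitive q-th root of unity, and let K = F(u) where u^q = t (so K/F is a cyclic extension of degree q). Then the image under the residue map of the set of norms, with 0 removed, equals exactly the set of nonzero q-th powers of the residue field: res(N_{K/F}(K)) \ {0} = (Fv^×)^q. -/
open scoped Classical in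
/-- The residue map `res : O_v → Fv` of a valued field, extended to all of `F` by sending
elements of `F \ O_v` to `0`. -/
noncomputable def residueExt {F : Type*} [Field F] {Γ₀ : Type*}
    [LinearOrderedCommGroupWithZero Γ₀] (v : Valuation F Γ₀) (x : F) :
    IsLocalRing.ResidueField v.valuationSubring :=
  if h : x ∈ v.valuationSubring then IsLocalRing.residue _ ⟨x, h⟩ else 0

section Aux

variable {F : Type*} [Field F] {Γ₀ : Type*} [LinearOrderedCommGroupWithZero Γ₀]
  (v : Valuation F Γ₀)

lemma residueExt_of_mem {x : F} (h : x ∈ v.valuationSubring) :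
    residueExt v x = IsLocalRing.residue _ ⟨x, h⟩ := dif_pos h

lemma residueExt_of_not_mem {x : F} (h : x ∉ v.valuationSubring) :
    residueExt v x = 0 := dif_neg h

lemma val_eq_one_of_isUnit {x : v.valuationSubring} (h : IsUnit x) : v (x : F) = 1 := by
  obtain ⟨w, rfl⟩ := h
  have h1 : (w.val : F) * (w.inv : F) = 1 := by
    rw [← Subring.coe_mul, w.val_inv, OneMemClass.coe_one]
  have h2 : v (w.val : F) * v (w.inv : F) = 1 := by rw [← v.map_mul, h1, v.map_one]
  refine le_antisymm w.val.2 ?_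
  calc (1 : Γ₀) = v (w.val : F) * v (w.inv : F) := h2.symm
    _ ≤ v (w.val : F) * 1 := mul_le_mul_right w.inv.2 _
    _ = v (w.val : F) := mul_one _

lemma isUnit_of_val_eq_one {x : v.valuationSubring} (h : v (x : F) = 1) : IsUnit x := by
  have hx0 : (x : F) ≠ 0 := fun h0 => by simp [h0] at h
  have hinv : (x : F)⁻¹ ∈ v.valuationSubring := by
    rw [Valuation.mem_valuationSubring_iff, map_inv₀, h, inv_one]
  refine IsUnit.of_mul_eq_one ⟨(x : F)⁻¹, hinv⟩ ?_
  ext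
  simp [mul_inv_cancel₀ hx0]

lemma val_eq_one_of_residue_ne_zero {x : v.valuationSubring}
    (h : IsLocalRing.residue _ x ≠ 0) : v (x : F) = 1 := by
  refine val_eq_one_of_isUnit v ?_
  by_contra h'
  exact h (Ideal.Quotient.eq_zero_iff_mem.mpr ((IsLocalRing.mem_maximalIdeal _).mpr h'))

lemma residue_ne_zero_of_val_eq_one {x : v.valuationSubring} (h : v (x : F) = 1) :
    IsLocalRing.residue _ x ≠ 0 := by
  intro h0
  have h1 := Ideal.Quotient.eq_zero_iff_mem.mp h0
  exact ((IsLocalRing.mem_maximalIdeal _).mp h1) (isUnit_of_val_eq_one v h)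

lemma residue_eq_zero_of_val_lt_one {x : v.valuationSubring} (h : v (x : F) < 1) :
    IsLocalRing.residue _ x = 0 := by
  refine Ideal.Quotient.eq_zero_iff_mem.mpr ((IsLocalRing.mem_maximalIdeal _).mpr ?_)
  intro hu
  exact absurd (val_eq_one_of_isUnit v hu) h.ne

lemma aux_pow_lt_of_pow_lt {x y : Γ₀} {n : ℕ} (h : x ^ n < y ^ n) : x < y := by
  by_contra hc
  push_neg at hc
  exact absurd (pow_le_pow_left' hc n) h.not_ge

lemma aux_eq_one_of_pow_eq_one {x : Γ₀} {n : ℕ} (hn : n ≠ 0) (h : x ^ n = 1) : x = 1 := by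
  rcases lt_trichotomy x 1 with hx | hx | hx
  · have := pow_lt_pow_left₀ hx zero_le' hn
    rw [h, one_pow] at this
    exact absurd this (lt_irrefl _)
  · exact hx
  · have := pow_lt_pow_left₀ hx zero_le' hn
    rw [h, one_pow] at this
    exact absurd this (lt_irrefl _)

end Aux

open Finset Polynomial in
/-- Let `(F,v)` be a valued field of equal characteristic with value group `Γ`, `q` a prime,
and `t ∈ F` such that the cosets `qΓ, qΓ + v(t), …, qΓ + (q−1)v(t)` are pairwise distinct
in `Γ` (stated multiplicatively). Assume `F` contains a primitive `q`-th root of unity and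
let `K = F(u)` with `u^q = t` (a cyclic extension of degree `q`). Then the image under the
residue map of the set of norms of `K/F`, with `0` removed, is exactly the set of `q`-th
powers of nonzero elements of the residue field. -/
theorem residue_image_norm_eq_pow_q
    (F : Type*) [Field F] (Γ₀ : Type*) [LinearOrderedCommGroupWithZero Γ₀]
    (v : Valuation F Γ₀)
    (hchar : ringChar F = ringChar (IsLocalRing.ResidueField v.valuationSubring))
    (q : ℕ) (hq : q.Prime) (t : F) (ht : t ≠ 0)
    (hcosets : ∀ i j : Fin q, i ≠ j → ∀ x y : F, x ≠ 0 → y ≠ 0 →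
      v x ^ q * v t ^ (i : ℕ) ≠ v y ^ q * v t ^ (j : ℕ))
    (hroot : ∃ ζ : F, IsPrimitiveRoot ζ q)
    (K : Type*) [Field K] [Algebra F K] (u : K)
    (hu : u ^ q = algebraMap F K t)
    (hadj : Algebra.adjoin F {u} = ⊤) :
    (Set.range fun a : K => residueExt v (Algebra.norm F a)) \ {0}
      = {y : IsLocalRing.ResidueField v.valuationSubring | ∃ z, z ≠ 0 ∧ z ^ q = y} := by
  classical
  have hq2 : 1 < q := hq.one_lt
  have hq0 : 0 < q := hq.pos
  have : NeZero q := ⟨hq.ne_zero⟩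
  have hvt : v t ≠ 0 := by simpa using ht
  -- t is not a q-th power
  have hnp : ∀ x : F, x ^ q ≠ t := by
    intro x hx
    have hx0 : x ≠ 0 := by rintro rfl; simp [zero_pow hq.ne_zero] at hx; exact ht hx.symm
    refine hcosets ⟨0, hq0⟩ ⟨1, hq2⟩ (by simp [Fin.ext_iff]) x 1 hx0 one_ne_zero ?_
    simp only [Fin.val_mk, pow_zero, pow_one, mul_one, map_one, one_pow, one_mul]
    rw [← map_pow, hx]
  have hirr : Irreducible (X ^ q - C t) := X_pow_sub_C_irreducible_of_prime hq hnp
  have hmonic : (X ^ q - C t).Monic := monic_X_pow_sub_C t hq.ne_zero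
  have haev : aeval u (X ^ q - C t) = 0 := by simp [map_sub, aeval_X_pow, hu]
  have hint : IsIntegral F u := ⟨X ^ q - C t, hmonic, by simpa using haev⟩
  have hmin : minpoly F u = X ^ q - C t :=
    (minpoly.eq_of_irreducible_of_monic hirr (by simpa using haev) hmonic).symm
  let e : (Algebra.adjoin F ({u} : Set K)) ≃ₐ[F] K :=
    (Subalgebra.equivOfEq _ ⊤ hadj).trans Subalgebra.topEquiv
  let pb : PowerBasis F K := (Algebra.adjoin.powerBasis hint).map e
  have hdim : pb.dim = q := by
    show (minpoly F u).natDegree = q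
    rw [hmin, natDegree_X_pow_sub_C]
  have hgen : pb.gen = u := rfl
  have hfr : Module.finrank F K = q := by rw [pb.finrank, hdim]
  have : Module.Finite F K := Module.Finite.of_basis pb.basis
  let b : Module.Basis (Fin q) F K := pb.basis.reindex (finCongr hdim)
  have hb : ∀ i : Fin q, b i = u ^ (i : ℕ) := by
    intro i
    simp [b, Module.Basis.reindex_apply, pb.coe_basis, hgen]
  have hrepr : ∀ n : ℕ, b.repr (u ^ n)
      = Finsupp.single (⟨n % q, Nat.mod_lt _ hq0⟩ : Fin q) (t ^ (n / q)) := by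
    intro n
    have hun : u ^ n = t ^ (n / q) • b (⟨n % q, Nat.mod_lt _ hq0⟩ : Fin q) := by
      rw [hb, Algebra.smul_def, map_pow, ← hu, ← pow_mul, ← pow_add, Nat.div_add_mod]
    rw [hun, map_smul, b.repr_self, Finsupp.smul_single, smul_eq_mul, mul_one]
  -- the key analysis of the valuation of a norm
  have key : ∀ a : K, a ≠ 0 → v (Algebra.norm F a) ≤ 1 →
      (v (Algebra.norm F a) = 1 →
        v (Algebra.norm F a - (b.repr a 0) ^ q) < 1 ∧ v (b.repr a 0) = 1) := by
    intro a ha0 _hle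
    set c : Fin q → F := fun i => b.repr a i with hc
    -- matrix entries
    have hM : ∀ i j : Fin q, Algebra.leftMulMatrix b a i j
        = c (i - j) * t ^ ((((i - j : Fin q) : ℕ) + (j : ℕ)) / q) := by
      intro i j
      rw [Algebra.leftMulMatrix_eq_repr_mul]
      conv_lhs => rw [← b.sum_repr a]
      rw [Finset.sum_mul, map_sum]
      have hterm : ∀ k : Fin q, b.repr ((b.repr a k • b k) * b j) i
          = if k = i - j then c (i - j) * t ^ ((((i - j : Fin q) : ℕ) + (j : ℕ)) / q)
            else 0 := by
        intro k
        rw [smul_mul_assoc, map_smul, hb k, hb j, ← pow_add, hrepr]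
        have hfin : (⟨((k : ℕ) + (j : ℕ)) % q, Nat.mod_lt _ hq0⟩ : Fin q) = k + j := by
          simp [Fin.ext_iff, Fin.add_def]
        rw [hfin, Finsupp.smul_single, Finsupp.single_apply]
        by_cases hk : k = i - j
        · subst hk
          rw [if_pos (by rw [sub_add_cancel]), if_pos rfl]
          simp [smul_eq_mul, mul_comm, hc]
        · rw [if_neg (fun h => hk (by subst h; rw [add_sub_cancel_right])), if_neg hk]
      rw [Finsupp.finset_sum_apply, Finset.sum_congr rfl (fun k _ => hterm k),
        Finset.sum_ite_eq' Finset.univ (i - j), if_pos (Finset.mem_univ _)]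
    set d : Equiv.Perm (Fin q) → Fin q → Fin q := fun σ j => σ j - j with hd
    set ee : Equiv.Perm (Fin q) → Fin q → ℕ :=
      fun σ j => (((d σ j : Fin q) : ℕ) + (j : ℕ)) / q with hee
    set Term : Equiv.Perm (Fin q) → F :=
      fun σ => ((Equiv.Perm.sign σ : ℤ) : F) * ∏ j, (c (d σ j) * t ^ ee σ j) with hTerm
    set W : Fin q → Γ₀ := fun i => v (c i) ^ q * v t ^ (i : ℕ) with hW
    -- determinant expansion
    have hdet : Algebra.norm F a = ∑ σ : Equiv.Perm (Fin q), Term σ := by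
      rw [Algebra.norm_eq_matrix_det b a, Matrix.det_apply]
      refine Finset.sum_congr rfl fun σ _ => ?_
      rw [hTerm]
      simp only [Units.smul_def, zsmul_eq_mul]
      congr 1
      exact Finset.prod_congr rfl fun j _ => hM (σ j) j
    -- weight identity
    have hweight : ∀ σ : Equiv.Perm (Fin q),
        ∑ j, ((d σ j : Fin q) : ℕ) = q * ∑ j, ee σ j := by
      intro σ
      have hpt : ∀ j : Fin q,
          ((d σ j : Fin q) : ℕ) + (j : ℕ) = q * ee σ j + ((σ j : Fin q) : ℕ) := by
        intro j
        have h1 : (((d σ j : Fin q) : ℕ) + (j : ℕ)) % q = ((σ j : Fin q) : ℕ) := by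
          have h2 : d σ j + j = σ j := sub_add_cancel _ _
          rw [← h2, Fin.add_def]
        conv_lhs => rw [← Nat.div_add_mod (((d σ j : Fin q) : ℕ) + (j : ℕ)) q, h1]
      have hsum := Finset.sum_congr rfl (fun j (_ : j ∈ Finset.univ) => hpt j)
      rw [Finset.sum_add_distrib, Finset.sum_add_distrib, ← Finset.mul_sum] at hsum
      have hperm : ∑ j, ((σ j : Fin q) : ℕ) = ∑ j : Fin q, (j : ℕ) :=
        Equiv.sum_comp σ (fun j : Fin q => (j : ℕ))
      set A := ∑ j, ((d σ j : Fin q) : ℕ)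
      set B := ∑ j : Fin q, (j : ℕ)
      set P := q * ∑ j, ee σ j
      omega
    -- valuation of each term
    have hval : ∀ σ : Equiv.Perm (Fin q), v (Term σ) ^ q = ∏ j, W (d σ j) := by
      intro σ
      have hsign : v (((Equiv.Perm.sign σ : ℤ) : F)) = 1 := by
        rcases Int.units_eq_one_or (Equiv.Perm.sign σ) with h | h <;>
          simp [h, Valuation.map_neg]
      have h1 : (∏ j, v (c (d σ j) * t ^ ee σ j)) = ∏ j, (v (c (d σ j)) * v t ^ ee σ j) :=
        Finset.prod_congr rfl fun j _ => by rw [v.map_mul, v.map_pow]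
      rw [hTerm]
      simp only []
      rw [v.map_mul, hsign, one_mul, map_prod, h1]
      calc (∏ j, (v (c (d σ j)) * v t ^ ee σ j)) ^ q
          = ∏ j, (v (c (d σ j)) * v t ^ ee σ j) ^ q := (Finset.prod_pow _ _ _).symm
        _ = ∏ j, (v (c (d σ j)) ^ q * v t ^ (ee σ j * q)) := by
            refine Finset.prod_congr rfl fun j _ => ?_
            rw [mul_pow, ← pow_mul]
        _ = (∏ j, v (c (d σ j)) ^ q) * v t ^ ((∑ j, ee σ j) * q) := by
            rw [Finset.prod_mul_distrib, Finset.prod_pow_eq_pow_sum, Finset.sum_mul]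
        _ = (∏ j, v (c (d σ j)) ^ q) * v t ^ (∑ j, ((d σ j : Fin q) : ℕ)) := by
            rw [Nat.mul_comm, ← hweight σ]
        _ = ∏ j, W (d σ j) := by
            rw [← Finset.prod_pow_eq_pow_sum, ← Finset.prod_mul_distrib]
    -- the maximal index
    have hex : ∃ k, c k ≠ 0 := by
      by_contra hall
      push_neg at hall
      have hz : b.repr a = 0 := Finsupp.ext fun i => hall i
      exact ha0 (b.repr.map_eq_zero_iff.mp hz)
    obtain ⟨k, hk⟩ := hex
    obtain ⟨i₀, -, hmax⟩ := Finset.exists_max_image Finset.univ W ⟨k, Finset.mem_univ k⟩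
    have hmax : ∀ i, W i ≤ W i₀ := fun i => hmax i (Finset.mem_univ i)
    have hWk : W k ≠ 0 := by
      simp only [hW]
      exact mul_ne_zero (pow_ne_zero _ (by simpa using hk)) (pow_ne_zero _ hvt)
    have hWi₀ : W i₀ ≠ 0 := fun h => hWk (le_antisymm (h ▸ hmax k) zero_le')
    have hci₀ : c i₀ ≠ 0 := by
      intro h
      apply hWi₀
      simp [hW, h, zero_pow hq.ne_zero]
    have hstrict : ∀ i, i ≠ i₀ → W i < W i₀ := by
      intro i hi
      rcases eq_or_ne (c i) 0 with h | h
      · have hWi : W i = 0 := by simp [hW, h, zero_pow hq.ne_zero]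
        rw [hWi]
        exact zero_lt_iff.mpr hWi₀
      · exact lt_of_le_of_ne (hmax i) (hcosets i i₀ hi (c i) (c i₀) h hci₀)
    have hprodlt : ∀ g : Fin q → Fin q, (∃ j, g j ≠ i₀) → ∏ j, W (g j) < W i₀ ^ q := by
      intro g ⟨j₀, hj₀⟩
      have h1 : ∏ j ∈ Finset.univ.erase j₀, W (g j) ≤ W i₀ ^ (q - 1) := by
        calc ∏ j ∈ Finset.univ.erase j₀, W (g j) ≤ ∏ _j ∈ Finset.univ.erase j₀, W i₀ :=
              Finset.prod_le_prod' fun i _ => hmax (g i)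
          _ = W i₀ ^ (q - 1) := by
              rw [Finset.prod_const, Finset.card_erase_of_mem (Finset.mem_univ _)]
              simp
      calc ∏ j, W (g j) = W (g j₀) * ∏ j ∈ Finset.univ.erase j₀, W (g j) :=
            (Finset.mul_prod_erase _ _ (Finset.mem_univ _)).symm
        _ < W i₀ * W i₀ ^ (q - 1) := by
            rw [mul_comm, mul_comm (W i₀)]
            exact mul_lt_mul_of_le_of_lt_of_nonneg_of_pos h1 (hstrict _ hj₀) zero_le' (zero_lt_iff.mpr (pow_ne_zero _ hWi₀))
        _ = W i₀ ^ q := by rw [← pow_succ', Nat.sub_add_cancel hq0]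
    -- the shift permutation
    set σ₀ : Equiv.Perm (Fin q) := Equiv.addLeft i₀ with hσ₀
    have hdσ₀ : ∀ j, d σ₀ j = i₀ := fun j => by
      simp only [hd, hσ₀, Equiv.coe_addLeft, add_sub_cancel_right]
    have hTσ₀q : v (Term σ₀) ^ q = W i₀ ^ q := by
      rw [hval σ₀]
      rw [Finset.prod_congr rfl fun j _ => congrArg W (hdσ₀ j)]
      rw [Finset.prod_const, Finset.card_univ, Fintype.card_fin]
    have hTσ₀ne : v (Term σ₀) ≠ 0 := by
      intro h
      apply pow_ne_zero q hWi₀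
      rw [← hTσ₀q, h, zero_pow hq.ne_zero]
    have hothers : ∀ σ : Equiv.Perm (Fin q), σ ≠ σ₀ → v (Term σ) < v (Term σ₀) := by
      intro σ hσ
      have hne : ∃ j, d σ j ≠ i₀ := by
        by_contra hallj
        push_neg at hallj
        apply hσ
        refine Equiv.ext fun j => ?_
        have := hallj j
        rw [hd] at this
        simp only [] at this
        rw [sub_eq_iff_eq_add] at this
        simpa [hσ₀] using this
      refine aux_pow_lt_of_pow_lt (n := q) ?_
      rw [hval σ, hTσ₀q]
      exact hprodlt _ hne
    have hnorm_eq : v (Algebra.norm F a) = v (Term σ₀) := by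
      rw [hdet, ← Finset.add_sum_erase _ Term (Finset.mem_univ σ₀)]
      rw [Valuation.map_add_eq_of_lt_left]
      exact v.map_sum_lt hTσ₀ne fun σ hσ => hothers σ (Finset.ne_of_mem_erase hσ)
    -- now assume the norm is a unit
    intro hone
    have hvT1 : v (Term σ₀) = 1 := by rw [← hnorm_eq, hone]
    have hWq1 : W i₀ ^ q = 1 := by rw [← hTσ₀q, hvT1, one_pow]
    have hWi₀1 : W i₀ = 1 := aux_eq_one_of_pow_eq_one hq.ne_zero hWq1
    have hi₀0 : i₀ = 0 := by
      by_contra h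
      refine hcosets i₀ 0 h (c i₀) 1 hci₀ one_ne_zero ?_
      rw [show ((0 : Fin q) : ℕ) = 0 from rfl]
      rw [pow_zero, map_one, one_pow, one_mul]
      exact hWi₀1
    subst hi₀0
    have hvc0 : v (c 0) = 1 := by
      refine aux_eq_one_of_pow_eq_one hq.ne_zero ?_
      have : W 0 = v (c 0) ^ q := by
        rw [hW]
        simp only []
        rw [show ((0 : Fin q) : ℕ) = 0 from rfl, pow_zero, mul_one]
      rw [← this, hWi₀1]
    have hσ₀1 : σ₀ = 1 := by
      refine Equiv.ext fun j => ?_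
      simp [hσ₀]
    have hT1 : Term σ₀ = c 0 ^ q := by
      rw [hσ₀1, hTerm]
      simp only [map_one, Units.val_one, Int.cast_one, one_mul]
      have h1 : ∀ j : Fin q, c (d 1 j) * t ^ ee 1 j = c 0 := by
        intro j
        have hd1 : d 1 j = 0 := by simp [hd]
        rw [hd1]
        have hee1 : ee 1 j = 0 := by
          have h2 : ee 1 j = (((d 1 j : Fin q) : ℕ) + (j : ℕ)) / q := rfl
          rw [h2, hd1]
          simpa using Nat.div_eq_of_lt j.isLt
        rw [hee1, pow_zero, mul_one]
      rw [Finset.prod_congr rfl fun j _ => h1 j, Finset.prod_const, Finset.card_univ,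
        Fintype.card_fin]
    constructor
    · have hdiff : Algebra.norm F a - c 0 ^ q = ∑ σ ∈ Finset.univ.erase σ₀, Term σ := by
        rw [hdet, ← Finset.add_sum_erase _ Term (Finset.mem_univ σ₀), hT1]
        ring
      rw [hdiff]
      refine v.map_sum_lt one_ne_zero fun σ hσ => ?_
      calc v (Term σ) < v (Term σ₀) := hothers σ (Finset.ne_of_mem_erase hσ)
        _ = 1 := hvT1
    · exact hvc0
  -- now prove the set equality
  ext y
  simp only [Set.mem_diff, Set.mem_range, Set.mem_singleton_iff, Set.mem_setOf_eq]
  constructor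
  · rintro ⟨⟨a, rfl⟩, hy0⟩
    by_cases hNa : (Algebra.norm F a : F) ∈ v.valuationSubring
    · have hres : IsLocalRing.residue _ (⟨Algebra.norm F a, hNa⟩ : v.valuationSubring) ≠ 0 := by
        rwa [residueExt_of_mem v hNa] at hy0
      have hv1 : v (Algebra.norm F a) = 1 := val_eq_one_of_residue_ne_zero v hres
      have ha0 : a ≠ 0 := by
        rintro rfl
        rw [Algebra.norm_zero] at hv1
        simp at hv1
      obtain ⟨hdiff, hvc0⟩ := key a ha0 hv1.le hv1
      have hc0mem : (b.repr a 0 : F) ∈ v.valuationSubring := by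
        rw [Valuation.mem_valuationSubring_iff, hvc0]
      set z : IsLocalRing.ResidueField v.valuationSubring :=
        IsLocalRing.residue _ (⟨b.repr a 0, hc0mem⟩ : v.valuationSubring) with hz
      refine ⟨z, residue_ne_zero_of_val_eq_one v hvc0, ?_⟩
      have hpowmem : ((b.repr a 0 : F) ^ q) ∈ v.valuationSubring :=
        Subring.pow_mem _ hc0mem q
      have hzq : z ^ q = IsLocalRing.residue _ (⟨(b.repr a 0 : F) ^ q, hpowmem⟩) := by
        rw [hz, ← map_pow]
        congr 1
      rw [hzq, residueExt_of_mem v hNa]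
      have hsub : IsLocalRing.residue _ ((⟨Algebra.norm F a, hNa⟩ : v.valuationSubring)
          - ⟨(b.repr a 0 : F) ^ q, hpowmem⟩) = 0 := by
        apply residue_eq_zero_of_val_lt_one
        exact hdiff
      rw [map_sub] at hsub
      rw [sub_eq_zero] at hsub
      exact hsub.symm
    · exact absurd (residueExt_of_not_mem v hNa) hy0
  · rintro ⟨z, hz0, rfl⟩
    obtain ⟨x, hx⟩ := IsLocalRing.residue_surjective z
    refine ⟨⟨algebraMap F K (x : F), ?_⟩, pow_ne_zero q hz0⟩
    rw [Algebra.norm_algebraMap, hfr]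
    have hmem : ((x : F) ^ q) ∈ v.valuationSubring := Subring.pow_mem _ x.2 q
    rw [residueExt_of_mem v hmem]
    have : (⟨(x : F) ^ q, hmem⟩ : v.valuationSubring) = x ^ q := by ext; simp
    rw [this, map_pow, hx]
end

section
/- Let (F,v) be a valued field of equal characteristic (char F = char Fv) with value group Γ, let q be a prime number, and let t ∈ F be such that the q cosets qΓ, qΓ + v(t), …, qΓ + (q−1)v(t) are pairwise distinct in Γ. Assume F contains a primitive q-th root of unity, and let K = F(u) where u^q = t (a cyclic extension of F of degree q). Then for every a = b₀ + b₁u + ⋯ + b_{q−1}u^{q−1} ∈ K with b₀, …, b_{q−1} ∈ F, one has v(N_{K/F}(a)) = min{ i·v(t) + q·v(bᵢ) : i = 0, …, q−1 } (where terms with bᵢ = 0 are omitted from the minimum). -/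
/-- In a linearly ordered commutative group with zero, `0` is the bottom element. -/
instance (priority := 10) {G : Type*} [LinearOrderedCommGroupWithZero G] : OrderBot G where
  bot := 0
  bot_le _ := zero_le'

section
variable {G : Type*} [LinearOrderedCommGroupWithZero G]

lemma aux_pow_lt_pow {x y : G} {n : ℕ} (h : x < y) (hn : n ≠ 0) : x ^ n < y ^ n := by
  have hy : y ≠ 0 := ne_of_gt (lt_of_le_of_lt zero_le' h)
  rcases eq_or_ne x 0 with hx | hx
  · rw [hx, zero_pow hn, zero_lt_iff]
    exact pow_ne_zero _ hy
  · obtain ⟨m, rfl⟩ := Nat.exists_eq_succ_of_ne_zero hn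
    rw [pow_succ, pow_succ]
    exact mul_lt_mul_of_le_of_lt_of_nonneg_of_pos (pow_le_pow_left' h.le m) h zero_le' (zero_lt_iff.mpr (pow_ne_zero _ hy))

lemma aux_le_of_pow_le_pow {x y : G} {n : ℕ} (hn : n ≠ 0) (h : x ^ n ≤ y ^ n) : x ≤ y := by
  by_contra hc
  exact absurd h (not_le.mpr (aux_pow_lt_pow (not_le.mp hc) hn))

lemma aux_lt_of_pow_lt_pow {x y : G} {n : ℕ} (h : x ^ n < y ^ n) : x < y := by
  by_contra hc
  exact absurd h (not_lt.mpr (pow_le_pow_left' (not_lt.mp hc) n))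

lemma aux_eq_of_pow_eq_pow {x y : G} {n : ℕ} (hn : n ≠ 0) (h : x ^ n = y ^ n) : x = y :=
  le_antisymm (aux_le_of_pow_le_pow hn h.le) (aux_le_of_pow_le_pow hn h.ge)
end

lemma aux_fin_sub_val {q : ℕ} (x j : Fin q) :
    ((x - j : Fin q) : ℕ) + (j:ℕ) = (x:ℕ) + q * (if (j:ℕ) ≤ (x:ℕ) then 0 else 1) := by
  have hj := j.isLt
  have hs := x.isLt
  rw [Fin.sub_def]
  show (q - (j:ℕ) + (x:ℕ)) % q + _ = _
  split <;> rename_i h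
  · have h2 : q - (j:ℕ) + (x:ℕ) = ((x:ℕ) - (j:ℕ)) + q := by omega
    rw [h2, Nat.add_mod_right, Nat.mod_eq_of_lt (by omega)]
    omega
  · rw [Nat.mod_eq_of_lt (by omega)]
    omega

open Finset in
lemma aux_det_val (F : Type*) [Field F] (Γ₀ : Type*) [LinearOrderedCommGroupWithZero Γ₀]
    (v : Valuation F Γ₀) (q : ℕ) (hq : q.Prime) (t : F) (ht : t ≠ 0)
    (hcosets : ∀ i j : Fin q, i ≠ j → ∀ x y : F, x ≠ 0 → y ≠ 0 →
      v x ^ q * v t ^ (i : ℕ) ≠ v y ^ q * v t ^ (j : ℕ))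
    (b : Fin q → F) :
    v (Matrix.det (fun i j : Fin q => (if (j:ℕ) ≤ (i:ℕ) then 1 else t) * b (i - j)))
      = Finset.univ.sup (fun i : Fin q => v t ^ (i : ℕ) * v (b i) ^ q) := by
  haveI : NeZero q := ⟨hq.ne_zero⟩
  set M : Matrix (Fin q) (Fin q) F :=
    fun i j => (if (j:ℕ) ≤ (i:ℕ) then 1 else t) * b (i - j) with hMdef
  set S : Γ₀ := Finset.univ.sup (fun i : Fin q => v t ^ (i : ℕ) * v (b i) ^ q) with hSdef
  by_cases hbz : ∀ i, b i = 0
  · have hM0 : M = 0 := by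
      ext i j; simp [hMdef, hbz]
    rw [hM0, Matrix.det_zero, map_zero]
    symm
    refine le_antisymm (Finset.sup_le fun i _ => ?_) zero_le'
    simp [hbz i, zero_pow hq.ne_zero]
  · push_neg at hbz
    obtain ⟨k, hk⟩ := hbz
    have hSk : v t ^ (k:ℕ) * v (b k) ^ q ≤ S := Finset.le_sup (f := fun i : Fin q => v t ^ (i : ℕ) * v (b i) ^ q) (Finset.mem_univ k)
    have hS0 : S ≠ 0 := by
      intro h
      rw [h] at hSk
      have : v t ^ (k:ℕ) * v (b k) ^ q = 0 := le_antisymm hSk zero_le'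
      simp [pow_eq_zero_iff, v.ne_zero_iff, ht, hk, hq.ne_zero] at this
    obtain ⟨i₀, -, hi₀⟩ := Finset.exists_mem_eq_sup Finset.univ Finset.univ_nonempty
      (fun i : Fin q => v t ^ (i : ℕ) * v (b i) ^ q)
    rw [← hSdef] at hi₀
    have hbi₀ : b i₀ ≠ 0 := by
      intro h
      rw [h] at hi₀
      simp [zero_pow hq.ne_zero] at hi₀
      exact hS0 hi₀
    have hstrict : ∀ i : Fin q, i ≠ i₀ → v t ^ (i:ℕ) * v (b i) ^ q < S := by
      intro i hne
      rcases eq_or_ne (b i) 0 with h | h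
      · rw [h]
        simp only [map_zero, zero_pow hq.ne_zero, mul_zero]
        exact zero_lt_iff.mpr hS0
      · refine lt_of_le_of_ne (Finset.le_sup (f := fun i : Fin q => v t ^ (i : ℕ) * v (b i) ^ q) (Finset.mem_univ i)) ?_
        rw [hi₀]
        intro hEq
        exact hcosets i i₀ hne (b i) (b i₀) h hbi₀
          (by rw [mul_comm (v (b i) ^ q), mul_comm (v (b i₀) ^ q)]; exact hEq)
    -- the key power identity for each permutation
    have hperm : ∀ σ : Equiv.Perm (Fin q),
        v (∏ j, M (σ j) j) ^ q
          = ∏ j, (v t ^ ((σ j - j : Fin q) : ℕ) * v (b (σ j - j)) ^ q) := by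
      intro σ
      have hv : v (∏ j, M (σ j) j)
          = v t ^ (∑ j : Fin q, (if (j:ℕ) ≤ ((σ j):ℕ) then 0 else 1)) * ∏ j, v (b (σ j - j)) := by
        rw [map_prod]
        have : ∀ j : Fin q, v (M (σ j) j)
            = v t ^ (if (j:ℕ) ≤ ((σ j):ℕ) then 0 else 1) * v (b (σ j - j)) := by
          intro j
          rw [hMdef]
          simp only
          rw [map_mul, apply_ite v, map_one]
          split <;> simp
        rw [Finset.prod_congr rfl (fun j _ => this j), Finset.prod_mul_distrib,
          Finset.prod_pow_eq_pow_sum]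
      have hsum : q * (∑ j : Fin q, (if (j:ℕ) ≤ ((σ j):ℕ) then 0 else 1))
          = ∑ j : Fin q, ((σ j - j : Fin q) : ℕ) := by
        have h1 : ∑ j : Fin q, (((σ j - j : Fin q) : ℕ) + (j:ℕ))
            = ∑ j : Fin q, (((σ j):ℕ) + q * (if (j:ℕ) ≤ ((σ j):ℕ) then 0 else 1)) :=
          Finset.sum_congr rfl fun j _ => aux_fin_sub_val (σ j) j
        rw [Finset.sum_add_distrib, Finset.sum_add_distrib, ← Finset.mul_sum] at h1
        have h2 : ∑ j : Fin q, ((σ j : Fin q) : ℕ) = ∑ j : Fin q, (j : ℕ) :=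
          Equiv.sum_comp σ (fun j : Fin q => (j : ℕ))
        omega
      rw [hv, mul_pow, Finset.prod_mul_distrib, ← pow_mul, mul_comm _ q, hsum,
        ← Finset.prod_pow_eq_pow_sum, ← Finset.prod_pow]
    have hle : ∀ σ : Equiv.Perm (Fin q), v (∏ j, M (σ j) j) ≤ S := by
      intro σ
      refine aux_le_of_pow_le_pow hq.ne_zero ?_
      rw [hperm σ]
      calc ∏ j, (v t ^ ((σ j - j : Fin q) : ℕ) * v (b (σ j - j)) ^ q)
          ≤ ∏ _j : Fin q, S := Finset.prod_le_prod' fun j _ => Finset.le_sup (f := fun i : Fin q => v t ^ (i : ℕ) * v (b i) ^ q) (Finset.mem_univ _)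
        _ = S ^ q := by rw [Finset.prod_const, Finset.card_univ, Fintype.card_fin]
    have hσ₀ : v (∏ j, M ((Equiv.addRight i₀) j) j) = S := by
      refine aux_eq_of_pow_eq_pow hq.ne_zero ?_
      rw [hperm]
      have hc : ∀ j : Fin q, (Equiv.addRight i₀) j - j = i₀ := fun j => add_sub_cancel_left j i₀
      calc ∏ j, (v t ^ (((Equiv.addRight i₀) j - j : Fin q) : ℕ)
              * v (b ((Equiv.addRight i₀) j - j)) ^ q)
          = ∏ _j : Fin q, (v t ^ (i₀ : ℕ) * v (b i₀) ^ q) :=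
            Finset.prod_congr rfl fun j _ => by rw [hc j]
        _ = (v t ^ (i₀ : ℕ) * v (b i₀) ^ q) ^ q := by
            rw [Finset.prod_const, Finset.card_univ, Fintype.card_fin]
        _ = S ^ q := by rw [← hi₀]
    have hlt : ∀ σ : Equiv.Perm (Fin q), σ ≠ Equiv.addRight i₀ →
        v (∏ j, M (σ j) j) < S := by
      intro σ hσne
      have hex : ∃ j, σ j - j ≠ i₀ := by
        by_contra h
        push_neg at h
        refine hσne (Equiv.ext fun j => ?_)
        have h2 := h j
        rw [sub_eq_iff_eq_add] at h2
        rw [h2, Equiv.coe_addRight, add_comm]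
      obtain ⟨j₁, hj₁⟩ := hex
      refine aux_lt_of_pow_lt_pow (n := q) ?_
      rw [hperm σ]
      have hq1 : q - 1 + 1 = q := Nat.succ_pred_eq_of_pos hq.pos
      calc ∏ j, (v t ^ ((σ j - j : Fin q) : ℕ) * v (b (σ j - j)) ^ q)
          = (v t ^ ((σ j₁ - j₁ : Fin q) : ℕ) * v (b (σ j₁ - j₁)) ^ q)
            * ∏ j ∈ Finset.univ.erase j₁, (v t ^ ((σ j - j : Fin q) : ℕ) * v (b (σ j - j)) ^ q) :=
            (Finset.mul_prod_erase _ _ (Finset.mem_univ j₁)).symm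
        _ ≤ (v t ^ ((σ j₁ - j₁ : Fin q) : ℕ) * v (b (σ j₁ - j₁)) ^ q) * S ^ (q - 1) := by
            refine mul_le_mul_right ?_ _
            calc ∏ j ∈ Finset.univ.erase j₁, (v t ^ ((σ j - j : Fin q) : ℕ) * v (b (σ j - j)) ^ q)
                ≤ ∏ _j ∈ Finset.univ.erase j₁, S := Finset.prod_le_prod' fun j _ =>
                  Finset.le_sup (f := fun i : Fin q => v t ^ (i : ℕ) * v (b i) ^ q)
                    (Finset.mem_univ _)
              _ = S ^ (q - 1) := by
                  rw [Finset.prod_const,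
                    Finset.card_erase_of_mem (Finset.mem_univ j₁), Finset.card_univ,
                    Fintype.card_fin]
        _ < S * S ^ (q - 1) := by
            calc (v t ^ ((σ j₁ - j₁ : Fin q) : ℕ) * v (b (σ j₁ - j₁)) ^ q) * S ^ (q - 1)
                = S ^ (q - 1) * (v t ^ ((σ j₁ - j₁ : Fin q) : ℕ) * v (b (σ j₁ - j₁)) ^ q) :=
                  mul_comm _ _
              _ < S ^ (q - 1) * S :=
                  mul_lt_mul_of_le_of_lt_of_nonneg_of_pos (le_refl _) (hstrict _ hj₁) zero_le' (zero_lt_iff.mpr (pow_ne_zero _ hS0))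
              _ = S * S ^ (q - 1) := mul_comm _ _
        _ = S ^ q := by rw [← pow_succ', hq1]
    have hsign : ∀ σ : Equiv.Perm (Fin q),
        v (((Equiv.Perm.sign σ : ℤ) : F) * ∏ i, M (σ i) i) = v (∏ i, M (σ i) i) := by
      intro σ
      rw [map_mul]
      rcases Int.units_eq_one_or (Equiv.Perm.sign σ) with h | h <;> rw [h] <;> simp
    rw [Matrix.det_apply']
    refine (v.map_sum_eq_of_lt (Finset.mem_univ (Equiv.addRight i₀)) ?_).trans ?_
    · intro σ hσ
      rw [hsign, hsign, hσ₀]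
      refine hlt σ fun heq => ?_
      rw [heq] at hσ
      simp at hσ
    · rw [hsign, hσ₀]


/-- Let `(F,v)` be a valued field of equal characteristic with value group `Γ`, `q` a prime,
and `t ∈ F` such that the cosets `qΓ, qΓ + v(t), …, qΓ + (q−1)v(t)` are pairwise distinct
in `Γ` (stated multiplicatively). Assume `F` contains a primitive `q`-th root of unity and
let `K = F(u)` with `u^q = t` (a cyclic extension of degree `q`). Then for every
`a = b₀ + b₁u + ⋯ + b_{q−1}u^{q−1}` one has
`v(N_{K/F}(a)) = min { i·v(t) + q·v(bᵢ) }` (terms with `bᵢ = 0` omitted); with the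
multiplicative convention for valuations this minimum becomes the supremum of the values
`v(t)^i · v(bᵢ)^q`, where the terms with `bᵢ = 0` contribute the bottom element `0`. -/
theorem valuation_norm_eq_min
    (F : Type*) [Field F] (Γ₀ : Type*) [LinearOrderedCommGroupWithZero Γ₀]
    (v : Valuation F Γ₀)
    (hchar : ringChar F = ringChar (IsLocalRing.ResidueField v.valuationSubring))
    (q : ℕ) (hq : q.Prime) (t : F) (ht : t ≠ 0)
    (hcosets : ∀ i j : Fin q, i ≠ j → ∀ x y : F, x ≠ 0 → y ≠ 0 →
      v x ^ q * v t ^ (i : ℕ) ≠ v y ^ q * v t ^ (j : ℕ))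
    (hroot : ∃ ζ : F, IsPrimitiveRoot ζ q)
    (K : Type*) [Field K] [Algebra F K] (u : K)
    (hu : u ^ q = algebraMap F K t)
    (hadj : Algebra.adjoin F {u} = ⊤)
    (b : Fin q → F) :
    v (Algebra.norm F (∑ i : Fin q, algebraMap F K (b i) * u ^ (i : ℕ)))
      = Finset.univ.sup (fun i : Fin q => v t ^ (i : ℕ) * v (b i) ^ q) := by
  classical
  haveI : NeZero q := ⟨hq.ne_zero⟩
  -- `t` is not a `q`-th power in `F`
  have htq : ∀ s : F, s ^ q ≠ t := by
    intro s hs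
    have hs0 : s ≠ 0 := by
      intro h; rw [h, zero_pow hq.ne_zero] at hs; exact ht hs.symm
    have hne : (⟨1, hq.one_lt⟩ : Fin q) ≠ ⟨0, hq.pos⟩ := by
      intro h; simpa using congrArg Fin.val h
    refine hcosets ⟨1, hq.one_lt⟩ ⟨0, hq.pos⟩ hne 1 s one_ne_zero hs0 ?_
    rw [map_one, one_pow, one_mul, pow_one, pow_zero, mul_one, ← v.map_pow, hs]
  -- the power basis `1, u, …, u^(q-1)`
  open Polynomial in
  have hirr : Irreducible (X ^ q - C t) := X_pow_sub_C_irreducible_of_prime hq htq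
  open Polynomial in
  have heval : Polynomial.aeval u (X ^ q - C t) = 0 := by simp [hu]
  open Polynomial in
  have hmonic : (X ^ q - C t).Monic := Polynomial.monic_X_pow_sub_C t hq.ne_zero
  have hint : IsIntegral F u := ⟨_, hmonic, heval⟩
  open Polynomial in
  have hmin : minpoly F u = X ^ q - C t :=
    (minpoly.eq_of_irreducible_of_monic hirr heval hmonic).symm
  let pb : PowerBasis F K := (Algebra.adjoin.powerBasis hint).map
    ((Subalgebra.equivOfEq _ _ hadj).trans Subalgebra.topEquiv)
  have hdim : pb.dim = q := by
    simp [pb, Algebra.adjoin.powerBasis, hmin]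
  have hgen : pb.gen = u := by
    simp [pb, Algebra.adjoin.powerBasis]
  let B : Module.Basis (Fin q) F K := pb.basis.reindex (finCongr hdim)
  have hB : ∀ i : Fin q, B i = u ^ (i : ℕ) := by
    intro i
    simp [B, Module.Basis.reindex_apply, PowerBasis.basis_eq_pow, hgen]
  set a : K := ∑ i : Fin q, algebraMap F K (b i) * u ^ (i : ℕ) with ha
  set M : Matrix (Fin q) (Fin q) F :=
    fun i j => (if (j:ℕ) ≤ (i:ℕ) then 1 else t) * b (i - j) with hMdef
  -- multiplication by `a` in the basis `B` is given by the matrix `M`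
  have key : ∀ j : Fin q, a * u ^ (j:ℕ) = ∑ i : Fin q, M i j • u ^ (i:ℕ) := by
    intro j
    rw [ha, Finset.sum_mul]
    refine Fintype.sum_equiv (Equiv.addRight j) _ _ ?_
    intro d
    have hsub : (d + j) - j = d := add_sub_cancel_right d j
    have hd := d.isLt
    have hj := j.isLt
    show algebraMap F K (b d) * u ^ (d:ℕ) * u ^ (j:ℕ) = M (d + j) j • u ^ ((d + j : Fin q) : ℕ)
    rw [Algebra.smul_def, hMdef]
    rcases lt_or_ge ((d:ℕ) + (j:ℕ)) q with h | h
    · have hcoe : ((d + j : Fin q) : ℕ) = (d:ℕ) + (j:ℕ) := by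
        simp [Fin.add_def, Nat.mod_eq_of_lt h]
      have hle : (j:ℕ) ≤ ((d + j : Fin q):ℕ) := by omega
      simp only [hsub, if_pos hle]
      rw [one_mul, mul_assoc, ← pow_add, hcoe]
    · have hcoe : ((d + j : Fin q) : ℕ) + q = (d:ℕ) + (j:ℕ) := by
        simp only [Fin.add_def]
        show ((d:ℕ) + (j:ℕ)) % q + q = _
        rw [Nat.mod_eq_sub_mod h, Nat.mod_eq_of_lt (by omega)]
        omega
      have hlt : ¬ ((j:ℕ) ≤ ((d + j : Fin q):ℕ)) := by omega
      simp only [hsub, if_neg hlt]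
      have h2 : (d:ℕ) + (j:ℕ) = q + ((d + j : Fin q):ℕ) := by omega
      rw [map_mul, ← hu, mul_assoc, ← pow_add, h2, mul_comm (u ^ q), mul_assoc, ← pow_add]
  have hrep : Algebra.leftMulMatrix B a = M := by
    ext i j
    rw [Algebra.leftMulMatrix_eq_repr_mul]
    have h2 : a * B j = ∑ i : Fin q, M i j • B i := by
      rw [hB j, key j]
      exact Finset.sum_congr rfl fun i _ => by rw [hB i]
    rw [h2, B.repr_sum_self]
  rw [Algebra.norm_eq_matrix_det B a, hrep, hMdef]
  exact aux_det_val F Γ₀ v q hq t ht hcosets b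
end

section
/- Let q be a prime number and identify the index set {0, …, q−1} with the finite field 𝔽_q. For c ∈ 𝔽_q^q, let An(c) be the set of anagrams of c, i.e. all tuples d ∈ 𝔽_q^q such that d_i = c_{σ(i)} for some permutation σ of 𝔽_q, let Σ̃(d) = Σ_{i ∈ 𝔽_q} i·d_i ∈ 𝔽_q, and for λ ∈ 𝔽_q let An^λ(c) = { d ∈ An(c) : Σ̃(d) = λ }. Then for all nonzero λ, μ ∈ 𝔽_q^×, the sets An^λ(c) and An^μ(c) have the same cardinality. -/
/-- The set of anagrams of a tuple `c ∈ 𝔽_q^q` (indexed by `𝔽_q = ZMod q`): all tuples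
obtained from `c` by permuting the entries. -/
def anagrams (q : ℕ) [NeZero q] (c : ZMod q → ZMod q) : Finset (ZMod q → ZMod q) :=
  Finset.univ.filter (fun d => ∃ σ : Equiv.Perm (ZMod q), d = c ∘ σ)

/-- `An^λ(c)`: the anagrams `d` of `c` with weighted sum `Σ̃(d) = Σ_{i ∈ 𝔽_q} i·d_i = λ`. -/
def anagramsLevel (q : ℕ) [NeZero q] (c : ZMod q → ZMod q) (lam : ZMod q) :
    Finset (ZMod q → ZMod q) :=
  (anagrams q c).filter (fun d => ∑ i : ZMod q, i * d i = lam)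

lemma mem_anagramsLevel_comp (q : ℕ) [Fact q.Prime]
    (c : ZMod q → ZMod q) (lam : ZMod q) (a : ZMod q) (ha : a ≠ 0)
    (d : ZMod q → ZMod q) (hd : d ∈ anagramsLevel q c lam) :
    (d ∘ (Equiv.mulLeft₀ a ha)) ∈ anagramsLevel q c (a⁻¹ * lam) := by
  simp only [anagramsLevel, anagrams, Finset.mem_filter, Finset.mem_univ, true_and] at hd ⊢
  obtain ⟨⟨σ, hσ⟩, hsum⟩ := hd
  refine ⟨⟨(Equiv.mulLeft₀ a ha).trans σ, ?_⟩, ?_⟩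
  · ext i; simp [hσ]
  · have : ∑ i : ZMod q, i * (d ∘ (Equiv.mulLeft₀ a ha)) i
        = ∑ j : ZMod q, (a⁻¹ * j) * d j := by
      refine Fintype.sum_equiv (Equiv.mulLeft₀ a ha) _ _ fun i => ?_
      simp only [Equiv.mulLeft₀_apply, Function.comp_apply]
      field_simp
    rw [this, ← hsum, Finset.mul_sum]
    exact Finset.sum_congr rfl fun j _ => by ring

/-- For a prime `q`, a tuple `c ∈ 𝔽_q^q` and nonzero `λ, μ ∈ 𝔽_q`, the sets `An^λ(c)` and
`An^μ(c)` have the same cardinality. -/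
theorem anagramsLevel_card_eq_of_ne_zero (q : ℕ) [Fact q.Prime]
    (c : ZMod q → ZMod q) (lam mu : ZMod q) (hlam : lam ≠ 0) (hmu : mu ≠ 0) :
    (anagramsLevel q c lam).card = (anagramsLevel q c mu).card := by
  set a : ZMod q := lam * mu⁻¹ with ha_def
  have ha : a ≠ 0 := mul_ne_zero hlam (inv_ne_zero hmu)
  have hainv : a⁻¹ * lam = mu := by
    rw [ha_def, mul_inv_rev, inv_inv, mul_assoc, inv_mul_cancel₀ hlam, mul_one]
  have hainv' : (a⁻¹)⁻¹ * mu = lam := by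
    rw [inv_inv, ha_def]; field_simp
  refine Finset.card_bij' (fun d _ => d ∘ (Equiv.mulLeft₀ a ha))
    (fun d _ => d ∘ (Equiv.mulLeft₀ a⁻¹ (inv_ne_zero ha))) ?_ ?_ ?_ ?_
  · intro d hd
    have := mem_anagramsLevel_comp q c lam a ha d hd
    rwa [hainv] at this
  · intro d hd
    have := mem_anagramsLevel_comp q c mu a⁻¹ (inv_ne_zero ha) d hd
    rwa [hainv'] at this
  · intro d _; ext i; simp only [Function.comp_apply, Equiv.mulLeft₀_apply, ← mul_assoc, mul_inv_cancel₀ ha, one_mul]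
  · intro d _; ext i; simp only [Function.comp_apply, Equiv.mulLeft₀_apply, ← mul_assoc, inv_mul_cancel₀ ha, one_mul]
end

section
/- Let q be a prime number and identify the index set {0, …, q−1} with the finite field 𝔽_q. For c ∈ 𝔽_q^q, let An(c) be the set of anagrams of c, let Σ̃(d) = Σ_{i ∈ 𝔽_q} i·d_i ∈ 𝔽_q, and An^λ(c) = { d ∈ An(c) : Σ̃(d) = λ }. Suppose c = (c_0, …, c_{q−1}) has at least two unequal entries (there exist i ≠ j with c_i ≠ c_j). Then |An^0(c)| = |An^1(c)| if and only if c_0 + c_1 + ⋯ + c_{q−1} ≠ 0 in 𝔽_q. -/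
open Equiv Finset MulAction

section Aux

variable {q : ℕ} [NeZero q] {c d : ZMod q → ZMod q}

lemma mem_anagrams : d ∈ anagrams q c ↔ ∃ σ : Perm (ZMod q), d = c ∘ σ := by
  simp [anagrams]

lemma comp_mem_anagrams (hd : d ∈ anagrams q c) (π : Perm (ZMod q)) :
    d ∘ π ∈ anagrams q c := by
  obtain ⟨σ, rfl⟩ := mem_anagrams.1 hd
  exact mem_anagrams.2 ⟨π.trans σ, rfl⟩

lemma sum_of_mem_anagrams (hd : d ∈ anagrams q c) : ∑ i, d i = ∑ i, c i := by
  obtain ⟨σ, rfl⟩ := mem_anagrams.1 hd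
  exact Fintype.sum_equiv σ _ _ (fun x => rfl)

lemma mem_anagramsLevel {lam : ZMod q} :
    d ∈ anagramsLevel q c lam ↔ d ∈ anagrams q c ∧ ∑ i : ZMod q, i * d i = lam := by
  simp [anagramsLevel]

/-- generic bijection lemma between two levels, via precomposition with a permutation. -/
lemma card_level_eq_of_perm (c : ZMod q → ZMod q) (π : Perm (ZMod q)) (μ ν : ZMod q)
    (h : ∀ d, d ∈ anagrams q c → ((∑ i : ZMod q, i * d i = μ) ↔ (∑ i : ZMod q, i * d (π i) = ν))) :
    (anagramsLevel q c μ).card = (anagramsLevel q c ν).card := by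
  refine Finset.card_bij' (fun d _ => d ∘ π) (fun e _ => e ∘ π.symm) ?_ ?_ ?_ ?_
  · intro d hd
    obtain ⟨hd1, hd2⟩ := mem_anagramsLevel.1 hd
    exact mem_anagramsLevel.2 ⟨comp_mem_anagrams hd1 π, (h d hd1).1 hd2⟩
  · intro e he
    obtain ⟨he1, he2⟩ := mem_anagramsLevel.1 he
    refine mem_anagramsLevel.2 ⟨comp_mem_anagrams he1 π.symm, ?_⟩
    refine (h (e ∘ π.symm) (comp_mem_anagrams he1 π.symm)).2 ?_
    simpa using he2
  · intro d _; funext i; simp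
  · intro e _; funext i; simp

lemma weighted_sum_shift (d : ZMod q → ZMod q) (t : ZMod q) :
    ∑ i : ZMod q, i * d (i + t) = (∑ i : ZMod q, i * d i) - t * ∑ i : ZMod q, d i := by
  have h := Fintype.sum_equiv (Equiv.addRight t) (fun i : ZMod q => i * d (i + t))
    (fun j : ZMod q => (j - t) * d j) (by intro x; simp)
  rw [h]
  simp only [sub_mul, Finset.sum_sub_distrib, Finset.mul_sum]

end Aux

section Prime

variable {q : ℕ} [Fact q.Prime] {c : ZMod q → ZMod q}

/-- If an anagram of `c` is invariant under the shift `i ↦ i + 1`, then `c` is constant. -/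
lemma not_shift_invariant (hc : ∃ i j : ZMod q, i ≠ j ∧ c i ≠ c j)
    {d : ZMod q → ZMod q} (hd : d ∈ anagrams q c) (hsh : ∀ i, d (i + 1) = d i) : False := by
  have hconst : ∀ j : ZMod q, d j = d 0 := by
    have key : ∀ n : ℕ, d (n : ZMod q) = d 0 := by
      intro n
      induction n with
      | zero => simp
      | succ n ih => rw [Nat.cast_succ, hsh, ih]
    intro j
    obtain ⟨n, rfl⟩ := ZMod.natCast_rightInverse.surjective j
    exact key n
  obtain ⟨σ, rfl⟩ := mem_anagrams.1 hd
  obtain ⟨i, j, _, hcij⟩ := hc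
  exact hcij (by rw [show c i = (c ∘ σ) (σ.symm i) by simp, show c j = (c ∘ σ) (σ.symm j) by simp,
    hconst (σ.symm i), hconst (σ.symm j)])

/-- When the total sum is zero, `q` divides the cardinality of each level. -/
lemma q_dvd_card_level (hc : ∃ i j : ZMod q, i ≠ j ∧ c i ≠ c j)
    (hs : ∑ i : ZMod q, c i = 0) (lam : ZMod q) : q ∣ (anagramsLevel q c lam).card := by
  classical
  set S := anagramsLevel q c lam with hS
  rcases eq_or_ne S ∅ with h | hne
  · simp [h]
  -- the shift map as a permutation of the subtype of S
  have hmem : ∀ d : ZMod q → ZMod q, d ∈ S → (fun i => d (i + 1)) ∈ S := by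
    intro d hd
    obtain ⟨hd1, hd2⟩ := mem_anagramsLevel.1 hd
    have h1 : (fun i => d (i + 1)) = d ∘ (Equiv.addRight (1 : ZMod q)) := rfl
    refine mem_anagramsLevel.2 ⟨h1 ▸ comp_mem_anagrams hd1 _, ?_⟩
    rw [weighted_sum_shift d 1, sum_of_mem_anagrams hd1, hs, mul_zero, sub_zero, hd2]
  have hmem' : ∀ d : ZMod q → ZMod q, d ∈ S → (fun i => d (i - 1)) ∈ S := by
    intro d hd
    obtain ⟨hd1, hd2⟩ := mem_anagramsLevel.1 hd
    have h1 : (fun i => d (i - 1)) = d ∘ (Equiv.addRight (-1 : ZMod q)) := by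
      funext i; simp [sub_eq_add_neg]
    refine mem_anagramsLevel.2 ⟨h1 ▸ comp_mem_anagrams hd1 _, ?_⟩
    have := weighted_sum_shift d (-1)
    simp only [← sub_eq_add_neg] at this
    rw [this, sum_of_mem_anagrams hd1, hs, mul_zero, sub_zero, hd2]
  let e : {x // x ∈ S} ≃ {x // x ∈ S} :=
    { toFun := fun x => ⟨fun i => x.1 (i + 1), hmem x.1 x.2⟩
      invFun := fun x => ⟨fun i => x.1 (i - 1), hmem' x.1 x.2⟩
      left_inv := by intro x; ext i; simp
      right_inv := by intro x; ext i; simp }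
  -- e has order q
  have hq : q.Prime := Fact.out
  have heq : e ^ q = 1 := by
    ext x i
    have hpow : ∀ (n : ℕ) (x : {x // x ∈ S}), ((e ^ n) x).1 = fun i => x.1 (i + n) := by
      intro n
      induction n with
      | zero => intro x; simp
      | succ n ih =>
        intro x
        have : e ^ (n + 1) = e ^ n * e := by rw [pow_succ]
        rw [this]
        funext i
        show ((e ^ n) (e x)).1 i = x.1 (i + (n + 1 : ℕ))
        rw [ih (e x)]
        show x.1 (i + n + 1) = x.1 (i + (n + 1 : ℕ))
        push_cast
        ring_nf
    rw [hpow q x]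
    show x.1 (i + (q : ZMod q)) = x.1 i
    simp [ZMod.natCast_self]
  have hene : e ≠ 1 := by
    intro h1
    obtain ⟨d, hd⟩ := Finset.nonempty_iff_ne_empty.2 hne
    have : e ⟨d, hd⟩ = ⟨d, hd⟩ := by rw [h1]; rfl
    have hfix : ∀ i, d (i + 1) = d i := by
      intro i
      exact congrFun (congrArg Subtype.val this) i
    exact not_shift_invariant hc (mem_anagramsLevel.1 hd).1 hfix
  have horder : orderOf e = q := by
    rcases (Nat.Prime.eq_one_or_self_of_dvd hq _ (orderOf_dvd_of_pow_eq_one heq)) with h | h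
    · exact absurd (orderOf_eq_one_iff.1 h) hene
    · exact h
  -- the cyclic group generated by e is a q-group acting on S with no fixed points
  set G := Subgroup.zpowers e with hG
  have hcardG : Nat.card G = q ^ 1 := by
    rw [pow_one, Nat.card_zpowers, horder]
  have hpG : IsPGroup q G := IsPGroup.of_card hcardG
  have hfixed : IsEmpty (fixedPoints G {x // x ∈ S}) := by
    constructor
    rintro ⟨x, hx⟩
    have : e • x = x := hx ⟨e, Subgroup.mem_zpowers e⟩
    have hfix : ∀ i, x.1 (i + 1) = x.1 i := by
      intro i
      exact congrFun (congrArg Subtype.val this) i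
    exact not_shift_invariant hc (mem_anagramsLevel.1 x.2).1 hfix
  have := hpG.card_modEq_card_fixedPoints (α := {x // x ∈ S})
  rw [Nat.card_of_isEmpty (α := fixedPoints G {x // x ∈ S})] at this
  have hcardS : Nat.card {x // x ∈ S} = S.card := Nat.card_eq_finsetCard S
  rw [hcardS] at this
  exact (Nat.modEq_zero_iff_dvd).1 this

noncomputable instance : Fintype (Perm (ZMod q))ᵈᵐᵃ :=
  Fintype.ofEquiv (Perm (ZMod q)) DomMulAct.mk

/-- The number of anagrams divides `q!`. -/
lemma card_anagrams_dvd : (anagrams q c).card ∣ q.factorial := by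
  classical
  have horb : (orbit (Perm (ZMod q))ᵈᵐᵃ c : Set (ZMod q → ZMod q)) = ↑(anagrams q c) := by
    ext d
    simp only [mem_orbit_iff, Finset.coe_filter, Set.mem_setOf_eq, anagrams,
      Finset.mem_filter, Finset.mem_univ, true_and]
    constructor
    · rintro ⟨g, rfl⟩
      exact ⟨(DomMulAct.mk.symm g), rfl⟩
    · rintro ⟨σ, rfl⟩
      exact ⟨DomMulAct.mk σ, rfl⟩
  have key := MulAction.card_orbit_mul_card_stabilizer_eq_card_group
    (G := (Perm (ZMod q))ᵈᵐᵃ) (X := ZMod q → ZMod q) c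
  have hcard1 : Fintype.card (orbit (Perm (ZMod q))ᵈᵐᵃ c) = (anagrams q c).card := by
    rw [← Set.toFinset_card]
    congr 1
    rw [← Finset.coe_inj, Set.coe_toFinset, horb]
  have hcard2 : Fintype.card (Perm (ZMod q))ᵈᵐᵃ = q.factorial := by
    rw [Fintype.card_congr (DomMulAct.mk (M := Perm (ZMod q))).symm, Fintype.card_perm, ZMod.card]
  rw [hcard1, hcard2] at key
  exact ⟨_, key.symm⟩

lemma not_q_sq_dvd : ¬ (q ^ 2 ∣ q.factorial) := by
  have hq : q.Prime := Fact.out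
  intro h
  obtain ⟨m, rfl⟩ : ∃ m, q = m + 1 := ⟨q - 1, by have := hq.two_le; omega⟩
  rw [Nat.factorial_succ, pow_two] at h
  have h2 : (m + 1) ∣ m.factorial := (Nat.mul_dvd_mul_iff_left (Nat.succ_pos m)).1 h
  have := (Nat.Prime.dvd_factorial hq).1 h2
  omega

end Prime

/-- For a prime `q` and a tuple `c ∈ 𝔽_q^q` with at least two unequal entries,
`|An^0(c)| = |An^1(c)|` if and only if `c_0 + ⋯ + c_{q−1} ≠ 0` in `𝔽_q`. -/
theorem anagramsLevel_card_zero_eq_one_iff (q : ℕ) [Fact q.Prime]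
    (c : ZMod q → ZMod q) (hc : ∃ i j : ZMod q, i ≠ j ∧ c i ≠ c j) :
    (anagramsLevel q c 0).card = (anagramsLevel q c 1).card ↔ (∑ i : ZMod q, c i) ≠ 0 := by
  classical
  have hq : q.Prime := Fact.out
  constructor
  · -- contrapositive: if sum = 0 then cards differ
    intro hcard hs
    have hscale : ∀ lam : ZMod q, lam ≠ 0 →
        (anagramsLevel q c 1).card = (anagramsLevel q c lam).card := by
      intro lam hlam
      refine card_level_eq_of_perm c (Equiv.mulLeft₀ lam⁻¹ (inv_ne_zero hlam)) 1 lam ?_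
      intro d _
      have hsum : ∑ i : ZMod q, i * d ((Equiv.mulLeft₀ lam⁻¹ (inv_ne_zero hlam)) i)
          = lam * ∑ i : ZMod q, i * d i := by
        rw [Finset.mul_sum]
        refine (Fintype.sum_equiv (Equiv.mulLeft₀ lam hlam)
          (fun i : ZMod q => lam * (i * d i))
          (fun i : ZMod q => i * d ((Equiv.mulLeft₀ lam⁻¹ (inv_ne_zero hlam)) i)) ?_).symm
        intro x
        simp only [Equiv.mulLeft₀_apply]
        rw [inv_mul_cancel_left₀ hlam x]
        ring
      rw [hsum]
      constructor
      · intro h1; rw [h1, mul_one]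
      · intro h1
        have : lam * (∑ i : ZMod q, i * d i) = lam * 1 := by rw [mul_one]; exact h1
        exact mul_left_cancel₀ hlam this
    have hall : ∀ lam : ZMod q, (anagramsLevel q c lam).card = (anagramsLevel q c 0).card := by
      intro lam
      by_cases h : lam = 0
      · rw [h]
      · rw [← hscale lam h, ← hcard]
    have htot : (anagrams q c).card = q * (anagramsLevel q c 0).card := by
      rw [Finset.card_eq_sum_card_fiberwise
        (f := fun d => ∑ i : ZMod q, i * d i) (t := Finset.univ) (fun d _ => Finset.mem_univ _)]
      have : ∀ lam : ZMod q,
          ((anagrams q c).filter (fun d => ∑ i : ZMod q, i * d i = lam)).card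
            = (anagramsLevel q c 0).card := fun lam => hall lam
      rw [Finset.sum_congr rfl (fun lam _ => this lam), Finset.sum_const, Finset.card_univ,
        ZMod.card, smul_eq_mul]
    have hdvd0 : q ∣ (anagramsLevel q c 0).card := q_dvd_card_level hc hs 0
    obtain ⟨k, hk⟩ := hdvd0
    have hq2 : q ^ 2 ∣ (anagrams q c).card := ⟨k, by rw [htot, hk]; ring⟩
    exact not_q_sq_dvd (hq2.trans card_anagrams_dvd)
  · -- if sum ≠ 0, translation gives a bijection
    intro hs
    set s := ∑ i : ZMod q, c i with hsdef
    refine card_level_eq_of_perm c (Equiv.addRight (-(s⁻¹))) 0 1 ?_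
    intro d hd
    have key : ∑ i : ZMod q, i * d (i + -(s⁻¹)) = (∑ i : ZMod q, i * d i) + 1 := by
      rw [weighted_sum_shift d (-(s⁻¹)), sum_of_mem_anagrams hd, ← hsdef]
      rw [neg_mul, sub_neg_eq_add, inv_mul_cancel₀ hs]
    constructor
    · intro h0
      show ∑ i : ZMod q, i * d (i + -(s⁻¹)) = 1
      rw [key, h0, zero_add]
    · intro h1
      have : (∑ i : ZMod q, i * d i) + 1 = 1 := by rw [← key]; exact h1
      linear_combination this
end

section
/- Let (F,v) be a valued field with value group Γ, let q be a prime number, and let t ∈ F^× be such that the q cosets qΓ, qΓ + v(t), …, qΓ + (q−1)v(t) are pairwise distinct in Γ. Then the polynomial X^q − t is irreducible over F. -/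
/-- Let `(F,v)` be a valued field with value group `Γ` and let `q` be a prime. If `t ∈ F^×`
is such that the cosets `qΓ, qΓ + v(t), …, qΓ + (q−1)v(t)` are pairwise distinct in `Γ`
(stated multiplicatively: the values `v(x)^q · v(t)^i` for `x ∈ F^×`, `0 ≤ i < q`, are
pairwise distinct for distinct `i`), then `X^q − t` is irreducible over `F`. -/
theorem irreducible_X_pow_sub_C_of_distinct_cosets
    (F : Type*) [Field F] (Γ₀ : Type*) [LinearOrderedCommGroupWithZero Γ₀]
    (v : Valuation F Γ₀) (q : ℕ) (hq : q.Prime) (t : F) (ht : t ≠ 0)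
    (hcosets : ∀ i j : Fin q, i ≠ j → ∀ x y : F, x ≠ 0 → y ≠ 0 →
      v x ^ q * v t ^ (i : ℕ) ≠ v y ^ q * v t ^ (j : ℕ)) :
    Irreducible (Polynomial.X ^ q - Polynomial.C t) := by
  apply X_pow_sub_C_irreducible_of_prime hq
  intro b hb
  have hb0 : b ≠ 0 := by
    rintro rfl
    rw [zero_pow hq.ne_zero] at hb; exact ht hb.symm
  have h2 : 2 ≤ q := hq.two_le
  have key := hcosets ⟨0, by omega⟩ ⟨1, by omega⟩ (by simp [Fin.ext_iff]) b 1 hb0 one_ne_zero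
  apply key
  simp only [pow_zero, pow_one, mul_one, map_one, one_pow, one_mul]
  rw [← hb, map_pow]
end

section
/- Let q and p be prime numbers such that q divides p − 1. Then there exists a division ring D which is an algebra over the field 𝔽_p((X)) of formal Laurent series over the field with p elements, whose center is exactly 𝔽_p((X)), and whose dimension over 𝔽_p((X)) is q². -/
open HahnSeries

namespace CDA

variable (p q : ℕ) [Fact p.Prime]

/-- map on Laurent series induced by a ring hom on coefficients -/
noncomputable def mapRH {R S : Type*} [Semiring R] [Semiring S] (f : R →+* S) :
    HahnSeries ℤ R →+* HahnSeries ℤ S where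
  toFun x := x.map (f : R →+* S)
  map_one' := HahnSeries.map_one f.toMonoidWithZeroHom
  map_mul' x y := HahnSeries.map_mul (f : R →ₙ+* S)
  map_zero' := HahnSeries.map_zero (f : ZeroHom R S)
  map_add' x y := HahnSeries.map_add (f : R →+ S)

@[simp] lemma mapRH_coeff {R S : Type*} [Semiring R] [Semiring S] (f : R →+* S)
    (x : HahnSeries ℤ R) (n : ℤ) : (mapRH f x).coeff n = f (x.coeff n) := rfl

abbrev E : Type := GaloisField p q

noncomputable instance : Field (E p q) := inferInstanceAs (Field (GaloisField p q))

abbrev L : Type := LaurentSeries (E p q)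

abbrev Fq : Type := LaurentSeries (ZMod p)

noncomputable def tau (j : ℕ) : E p q →+* E p q := iterateFrobenius (E p q) p j

noncomputable def sig (j : ℕ) : L p q →+* L p q := mapRH (tau p q j)

noncomputable def emb : ZMod p →+* E p q := algebraMap _ _

noncomputable def fmap : Fq p →+* L p q := mapRH (emb p q)

end CDA
namespace CDA
variable (p q : ℕ) [Fact p.Prime]

lemma tau_def (j : ℕ) (x : E p q) : tau p q j x = x ^ p ^ j := rfl

lemma tau_tau (i j : ℕ) (x : E p q) : tau p q j (tau p q i x) = tau p q (i + j) x := by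
  simp only [tau_def, ← pow_mul, ← _root_.pow_add]

lemma tau_q (x : E p q) (hq : q ≠ 0) : tau p q q x = x := by
  have : Fintype (E p q) := Fintype.ofFinite _
  rw [tau_def]
  have hc : Fintype.card (E p q) = p ^ q := by
    rw [← Nat.card_eq_fintype_card]; exact GaloisField.card p q hq
  rw [← hc]; exact FiniteField.pow_card x

lemma tau_injective (j : ℕ) : Function.Injective (tau p q j) :=
  (tau p q j).injective

lemma tau_emb (j : ℕ) (c : ZMod p) : tau p q j (emb p q c) = emb p q c := by
  rw [tau_def, ← map_pow]
  congr 1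
  induction j with
  | zero => simp
  | succ n ih => rw [pow_succ, pow_mul, ih, ZMod.pow_card]

lemma sig_sig (i j : ℕ) (x : L p q) : sig p q j (sig p q i x) = sig p q (i + j) x := by
  ext n; simp [sig, tau_tau]

lemma sig_zero (x : L p q) : sig p q 0 x = x := by
  ext n; simp [sig, tau_def]

lemma sig_add_mul_q (a c : ℕ) (hq : q ≠ 0) (x : L p q) :
    sig p q (a + q * c) x = sig p q a x := by
  induction c with
  | zero => simp
  | succ n ih =>
      have : a + q * (n + 1) = (a + q * n) + q := by ring
      rw [this, ← sig_sig, ih]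
      ext m
      simp only [sig, mapRH_coeff]
      rw [tau_q p q _ hq]

lemma sig_fmap (j : ℕ) (f : Fq p) : sig p q j (fmap p q f) = fmap p q f := by
  ext n; simp [sig, fmap, tau_emb]

lemma sig_eq_zero_iff (j : ℕ) (x : L p q) : sig p q j x = 0 ↔ x = 0 := by
  constructor
  · intro h; ext n
    have h2 : tau p q j (x.coeff n) = 0 := congrArg (fun y => HahnSeries.coeff y n) h
    have := tau_injective p q j (a₂ := 0) (by simpa using h2)
    simpa using this
  · rintro rfl; exact map_zero _

lemma sig_order (j : ℕ) (x : L p q) (hx : x ≠ 0) : (sig p q j x).order = x.order := by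
  have hsx : sig p q j x ≠ 0 := fun h => hx ((sig_eq_zero_iff p q j x).mp h)
  apply le_antisymm
  · apply HahnSeries.order_le_of_coeff_ne_zero
    show tau p q j (x.coeff x.order) ≠ 0
    simpa using fun h => (HahnSeries.coeff_order_eq_zero.not.mpr hx) (tau_injective p q j (by simpa using h))
  · apply HahnSeries.order_le_of_coeff_ne_zero
    intro h
    exact (HahnSeries.coeff_order_eq_zero.not.mpr hsx) (by simpa [sig] using congrArg (tau p q j) h)

/-- the powers of X as elements of L -/
noncomputable def Xp (c : ℕ) : L p q := HahnSeries.single (c : ℤ) 1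

lemma Xp_ne_zero (c : ℕ) : Xp p q c ≠ 0 := HahnSeries.single_ne_zero one_ne_zero

lemma Xp_order (c : ℕ) : (Xp p q c).order = (c : ℤ) := HahnSeries.order_single one_ne_zero

lemma Xp_mul (a b : ℕ) : Xp p q a * Xp p q b = Xp p q (a + b) := by
  rw [Xp, Xp, HahnSeries.single_mul_single, one_mul]; norm_num [Xp]

lemma sig_Xp (j c : ℕ) : sig p q j (Xp p q c) = Xp p q c := by
  ext n
  simp only [sig, mapRH_coeff, Xp, HahnSeries.coeff_single]
  split <;> simp

end CDA
namespace CDA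
variable (p q : ℕ) [Fact p.Prime] [NeZero q]

/-- the carry 2-cocycle -/
def carry (j m : ZMod q) : ℕ := (j.val + m.val) / q

lemma carry_spec (j m : ZMod q) : j.val + m.val = q * carry q j m + (j + m).val := by
  rw [carry, ZMod.val_add, Nat.div_add_mod]

lemma carry_cocycle (j m n : ZMod q) :
    carry q j m + carry q (j + m) n = carry q m n + carry q j (m + n) := by
  have h1 := carry_spec q j m
  have h2 := carry_spec q (j + m) n
  have h3 := carry_spec q m n
  have h4 := carry_spec q j (m + n)
  have hq : 0 < q := Nat.pos_of_ne_zero (NeZero.ne q)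
  apply Nat.eq_of_mul_eq_mul_left hq
  have L : q * (carry q j m + carry q (j + m) n) + (j + m + n).val
      = j.val + m.val + n.val := by
    rw [Nat.mul_add, add_assoc, ← h2, ← add_assoc, ← h1]
  have R : q * (carry q m n + carry q j (m + n)) + (j + (m + n)).val
      = j.val + (m.val + n.val) := by
    rw [Nat.mul_add, add_assoc, ← h4, Nat.add_left_comm, ← h3]
  have hv : (j + m + n).val = (j + (m + n)).val := by rw [add_assoc]
  omega

lemma carry_zero_left (m : ZMod q) : carry q 0 m = 0 := by
  simp [carry, Nat.div_eq_of_lt (ZMod.val_lt m)]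

lemma carry_zero_right (m : ZMod q) : carry q m 0 = 0 := by
  simp [carry, Nat.div_eq_of_lt (ZMod.val_lt m)]

lemma carry_comm (j m : ZMod q) : carry q j m = carry q m j := by
  simp [carry, Nat.add_comm]

end CDA

/-- The carrier of the division algebra: `q`-tuples of Laurent series over `GaloisField p q`. -/
def CDA.D (p q : ℕ) [Fact p.Prime] : Type := ZMod q → CDA.L p q

namespace CDA
variable (p q : ℕ) [Fact p.Prime] [NeZero q]

noncomputable instance : AddCommGroup (D p q) := Pi.addCommGroup

noncomputable instance mulD : Mul (D p q) :=
  ⟨fun d e k => ∑ j : ZMod q,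
      d j * sig p q j.val (e (k - j)) * Xp p q (carry q j (k - j))⟩

lemma mul_apply (d e : D p q) (k : ZMod q) :
    (d * e) k = ∑ j : ZMod q,
      d j * sig p q j.val (e (k - j)) * Xp p q (carry q j (k - j)) := rfl

noncomputable instance oneD : One (D p q) := ⟨Pi.single 0 1⟩

lemma D_one_def : (1 : D p q) = Pi.single (0 : ZMod q) (1 : L p q) := rfl

lemma D_one_mul (d : D p q) : (1 : D p q) * d = d := by
  funext k
  rw [mul_apply, Finset.sum_eq_single (0 : ZMod q)]
  · rw [D_one_def]
    simp [sig_zero, carry_zero_left, Xp, HahnSeries.single_zero_one]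
  · intro j _ hj; rw [D_one_def]; simp [Pi.single_apply, hj]
  · simp

lemma D_mul_one (d : D p q) : d * (1 : D p q) = d := by
  funext k
  rw [mul_apply, Finset.sum_eq_single k]
  · rw [show k - k = 0 from sub_self k, D_one_def]
    simp [carry_zero_right, Xp, HahnSeries.single_zero_one]
  · intro j _ hj
    have h0 : k - j ≠ 0 := fun h => hj (sub_eq_zero.mp h).symm
    rw [D_one_def]; simp [Pi.single_apply, h0]
  · simp

lemma D_mul_assoc (d e f : D p q) : d * e * f = d * (e * f) := by
  funext k
  rw [mul_apply]
  simp only [mul_apply, Finset.sum_mul]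
  rw [Finset.sum_comm]
  refine Finset.sum_congr rfl fun j _ => ?_
  rw [map_sum (sig p q j.val)]
  rw [Finset.mul_sum, Finset.sum_mul]
  refine Fintype.sum_equiv (Equiv.subRight j) _ _ fun i => ?_
  simp only [Equiv.subRight_apply]
  rw [map_mul, map_mul, sig_sig, sig_Xp]
  have h1 : k - j - (i - j) = k - i := by ring
  rw [h1]
  have hval : (i - j).val + j.val = i.val + q * carry q (i - j) j := by
    have h := carry_spec q (i - j) j
    have h2 : i - j + j = i := by ring
    rw [h2] at h; omega
  rw [hval, sig_add_mul_q p q _ _ (NeZero.ne q)]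
  have hX : Xp p q (carry q j (i - j)) * Xp p q (carry q i (k - i))
      = Xp p q (carry q (i - j) (k - i)) * Xp p q (carry q j (k - j)) := by
    rw [Xp_mul, Xp_mul]
    have h2 : j + (i - j) = i := by ring
    have h3 : i - j + (k - i) = k - j := by ring
    have := carry_cocycle q j (i - j) (k - i)
    rw [h2, h3] at this
    rw [this]
  linear_combination (d j * sig p q j.val (e (i - j)) * sig p q i.val (f (k - i))) * hX

lemma D_left_distrib (d e f : D p q) : d * (e + f) = d * e + d * f := by
  funext k
  show (d * (e + f)) k = (d * e) k + (d * f) k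
  simp only [mul_apply]
  rw [← Finset.sum_add_distrib]
  refine Finset.sum_congr rfl fun j _ => ?_
  have : (e + f) (k - j) = e (k - j) + f (k - j) := rfl
  rw [this, map_add]; ring

lemma D_right_distrib (d e f : D p q) : (d + e) * f = d * f + e * f := by
  funext k
  show ((d + e) * f) k = (d * f) k + (e * f) k
  simp only [mul_apply]
  rw [← Finset.sum_add_distrib]
  refine Finset.sum_congr rfl fun j _ => ?_
  have : (d + e) j = d j + e j := rfl
  rw [this]; ring

lemma D_zero_mul (d : D p q) : (0 : D p q) * d = 0 := by
  funext k
  rw [mul_apply]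
  show _ = (0 : L p q)
  simp [show ∀ j : ZMod q, (0 : D p q) j = 0 from fun _ => rfl]

lemma D_mul_zero (d : D p q) : d * (0 : D p q) = 0 := by
  funext k
  rw [mul_apply]
  show _ = (0 : L p q)
  simp [show ∀ j : ZMod q, (0 : D p q) (k - j) = 0 from fun _ => rfl]

noncomputable instance ringD : Ring (D p q) :=
  { (inferInstance : AddCommGroup (D p q)), mulD p q, oneD p q with
    left_distrib := D_left_distrib p q
    right_distrib := D_right_distrib p q
    zero_mul := D_zero_mul p q
    mul_zero := D_mul_zero p q
    mul_assoc := D_mul_assoc p q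
    one_mul := D_one_mul p q
    mul_one := D_mul_one p q }

end CDA
namespace CDA
variable (p q : ℕ) [Fact p.Prime] [NeZero q]

/-- basis elements of `D` -/
noncomputable def sing (j : ZMod q) (a : L p q) : D p q := Pi.single j a

lemma sing_apply (j : ZMod q) (a : L p q) (k : ZMod q) :
    sing p q j a k = if k = j then a else 0 := Pi.single_apply j a k

lemma single0_mul (a : L p q) (d : D p q) (k : ZMod q) :
    (sing p q 0 a * d) k = a * d k := by
  rw [mul_apply, Finset.sum_eq_single (0 : ZMod q)]
  · rw [sing_apply]
    simp [sig_zero, carry_zero_left, Xp, HahnSeries.single_zero_one]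
  · intro j _ hj; rw [sing_apply]; simp [hj]
  · simp

lemma mul_single0 (a : L p q) (ha : ∀ j : ℕ, sig p q j a = a) (d : D p q) (k : ZMod q) :
    (d * sing p q 0 a) k = d k * a := by
  rw [mul_apply, Finset.sum_eq_single k]
  · rw [show k - k = 0 from sub_self k, sing_apply]
    simp [ha, carry_zero_right, Xp, HahnSeries.single_zero_one]
  · intro j _ hj
    have h0 : k - j ≠ 0 := fun h => hj (sub_eq_zero.mp h).symm
    rw [sing_apply]; simp [h0]
  · simp

/-- the structure map from Laurent series over `ZMod p` -/
noncomputable def toD : Fq p →+* D p q where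
  toFun f := sing p q 0 (fmap p q f)
  map_one' := by
    show sing p q 0 (fmap p q 1) = 1
    rw [map_one]; rfl
  map_mul' f g := by
    show sing p q 0 (fmap p q (f * g)) = sing p q 0 (fmap p q f) * sing p q 0 (fmap p q g)
    funext k
    rw [single0_mul, sing_apply, sing_apply]
    rcases eq_or_ne k 0 with rfl | hk
    · simp [map_mul]
    · simp [hk]
  map_zero' := by
    show sing p q 0 (fmap p q 0) = 0
    rw [map_zero]; funext k; rw [sing_apply]
    show _ = (0 : L p q)
    split <;> rfl
  map_add' f g := by
    show sing p q 0 (fmap p q (f + g)) = sing p q 0 (fmap p q f) + sing p q 0 (fmap p q g)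
    funext k
    show _ = sing p q 0 (fmap p q f) k + sing p q 0 (fmap p q g) k
    rw [sing_apply, sing_apply, sing_apply]
    rcases eq_or_ne k 0 with rfl | hk
    · simp [map_add]
    · simp [hk]

lemma toD_apply (f : Fq p) : toD p q f = sing p q 0 (fmap p q f) := rfl

lemma toD_commutes (f : Fq p) (d : D p q) : toD p q f * d = d * toD p q f := by
  funext k
  rw [toD_apply]
  rw [single0_mul, mul_single0 p q _ (fun j => sig_fmap p q j f)]
  exact mul_comm _ _

noncomputable instance algebraD : Algebra (Fq p) (D p q) :=
  RingHom.toAlgebra' (toD p q) (toD_commutes p q)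

lemma algebraMap_D_apply (f : Fq p) :
    algebraMap (Fq p) (D p q) f = sing p q 0 (fmap p q f) := rfl

instance : Nontrivial (D p q) := by
  refine ⟨1, 0, fun h => ?_⟩
  have h2 := congrFun h 0
  rw [D_one_def] at h2
  have hz : (0 : D p q) 0 = (0 : L p q) := rfl
  rw [hz] at h2
  simp at h2

end CDA
namespace CDA
variable (p q : ℕ) [Fact p.Prime] [NeZero q]

/-- the valuation key of a component -/
noncomputable def key (d : D p q) (j : ZMod q) : ℤ := q * (d j).order + j.val

lemma key_inj {a b : ℤ} {j j' : ZMod q} (h : q * a + (j.val : ℤ) = q * b + (j'.val : ℤ)) :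
    a = b ∧ j = j' := by
  have hq : (0 : ℤ) < q := by exact_mod_cast Nat.pos_of_ne_zero (NeZero.ne q)
  have hj : (j.val : ℤ) < q := by exact_mod_cast ZMod.val_lt j
  have hj' : (j'.val : ℤ) < q := by exact_mod_cast ZMod.val_lt j'
  have hj0 : (0 : ℤ) ≤ (j.val : ℤ) := Int.natCast_nonneg _
  have hj0' : (0 : ℤ) ≤ (j'.val : ℤ) := Int.natCast_nonneg _
  have hab : a = b := by
    rcases lt_trichotomy a b with hlt | heq | hgt
    · exfalso
      have : q * a + q ≤ q * b := by
        have := Int.add_one_le_iff.mpr hlt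
        nlinarith
      linarith
    · exact heq
    · exfalso
      have : q * b + q ≤ q * a := by
        have := Int.add_one_le_iff.mpr hgt
        nlinarith
      linarith
  refine ⟨hab, ?_⟩
  have hv : (j.val : ℤ) = (j'.val : ℤ) := by rw [hab] at h; linarith
  have hv' : j.val = j'.val := by exact_mod_cast hv
  have := ZMod.natCast_val (n := q) (R := ZMod q) j
  rw [ZMod.cast_id] at this
  have that := ZMod.natCast_val (n := q) (R := ZMod q) j'
  rw [ZMod.cast_id] at that
  rw [← this, ← that, hv']

lemma exists_ne_zero {d : D p q} (hd : d ≠ 0) : ∃ j, d j ≠ 0 := by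
  by_contra h
  push_neg at h
  exact hd (funext fun j => h j)

theorem D_mul_ne_zero {d e : D p q} (hd : d ≠ 0) (he : e ≠ 0) : d * e ≠ 0 := by
  classical
  have hq : (0 : ℤ) < q := by exact_mod_cast Nat.pos_of_ne_zero (NeZero.ne q)
  obtain ⟨j₁, hj₁⟩ := exists_ne_zero p q hd
  obtain ⟨m₁, hm₁⟩ := exists_ne_zero p q he
  set sd : Finset (ZMod q) := Finset.univ.filter (fun j => d j ≠ 0) with hsd
  set se : Finset (ZMod q) := Finset.univ.filter (fun j => e j ≠ 0) with hse
  obtain ⟨j₀, hj₀mem, hj₀min⟩ := sd.exists_min_image (key p q d)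
    ⟨j₁, Finset.mem_filter.mpr ⟨Finset.mem_univ _, hj₁⟩⟩
  obtain ⟨m₀, hm₀mem, hm₀min⟩ := se.exists_min_image (key p q e)
    ⟨m₁, Finset.mem_filter.mpr ⟨Finset.mem_univ _, hm₁⟩⟩
  have hdj₀ : d j₀ ≠ 0 := (Finset.mem_filter.mp hj₀mem).2
  have hem₀ : e m₀ ≠ 0 := (Finset.mem_filter.mp hm₀mem).2
  set k₀ : ZMod q := j₀ + m₀ with hk₀
  set n₀ : ℤ := (d j₀).order + (e m₀).order + carry q j₀ m₀ with hn₀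
  intro hcontra
  -- the coefficient of X^n₀ in component k₀ of d * e is nonzero
  have hcoeff : ((d * e) k₀).coeff n₀ ≠ 0 := by
    rw [mul_apply]
    have hsum : (∑ j : ZMod q,
          d j * sig p q j.val (e (k₀ - j)) * Xp p q (carry q j (k₀ - j))).coeff n₀
        = ∑ j : ZMod q,
          (d j * sig p q j.val (e (k₀ - j)) * Xp p q (carry q j (k₀ - j))).coeff n₀ :=
      map_sum (HahnSeries.coeff.addMonoidHom n₀) _ _
    rw [hsum]
    have hterm : ∀ j : ZMod q, j ≠ j₀ →
        (d j * sig p q j.val (e (k₀ - j)) * Xp p q (carry q j (k₀ - j))).coeff n₀ = 0 := by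
      intro j hj
      rcases eq_or_ne (d j) 0 with hz | hdz
      · rw [hz]; simp
      rcases eq_or_ne (e (k₀ - j)) 0 with hz | hez
      · rw [hz]; simp
      apply HahnSeries.coeff_eq_zero_of_lt_order
      have hsz : sig p q j.val (e (k₀ - j)) ≠ 0 :=
        fun h => hez ((sig_eq_zero_iff p q _ _).mp h)
      rw [HahnSeries.order_mul (mul_ne_zero hdz hsz) (Xp_ne_zero p q _),
        HahnSeries.order_mul hdz hsz, sig_order p q _ _ hez, Xp_order]
      -- valuation comparison
      have hjmem : j ∈ sd := Finset.mem_filter.mpr ⟨Finset.mem_univ _, hdz⟩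
      have hmmem : k₀ - j ∈ se := Finset.mem_filter.mpr ⟨Finset.mem_univ _, hez⟩
      have h1 : key p q d j₀ ≤ key p q d j := hj₀min j hjmem
      have h1' : key p q d j₀ ≠ key p q d j := by
        intro h
        simp only [key] at h
        exact hj ((key_inj q h.symm).2)
      have h2 : key p q e m₀ ≤ key p q e (k₀ - j) := hm₀min _ hmmem
      have hc1 : (j.val : ℤ) + ((k₀ - j).val : ℤ)
          = q * carry q j (k₀ - j) + (k₀.val : ℤ) := by
        have := carry_spec q j (k₀ - j)
        have h3 : j + (k₀ - j) = k₀ := by ring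
        rw [h3] at this
        exact_mod_cast this
      have hc0 : (j₀.val : ℤ) + (m₀.val : ℤ)
          = q * carry q j₀ m₀ + (k₀.val : ℤ) := by
        have := carry_spec q j₀ m₀
        exact_mod_cast this
      simp only [key] at h1 h1' h2
      have hmul : q * n₀ < q * ((d j).order + (e (k₀ - j)).order + carry q j (k₀ - j)) := by
        have e1 : q * n₀ = q * (d j₀).order + q * (e m₀).order + q * (carry q j₀ m₀ : ℤ) := by
          rw [hn₀]; ring
        have e2 : q * ((d j).order + (e (k₀ - j)).order + carry q j (k₀ - j))
            = q * (d j).order + q * (e (k₀ - j)).order + q * (carry q j (k₀ - j) : ℤ) := by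
          ring
        omega
      exact lt_of_mul_lt_mul_left (by omega) (le_of_lt hq)
    rw [Finset.sum_eq_single j₀ (fun j _ hj => hterm j hj) (by simp)]
    have hm : k₀ - j₀ = m₀ := by ring
    rw [hm]
    have hsz : sig p q j₀.val (e m₀) ≠ 0 := fun h => hem₀ ((sig_eq_zero_iff p q _ _).mp h)
    have hprod : d j₀ * sig p q j₀.val (e m₀) * Xp p q (carry q j₀ m₀) ≠ 0 :=
      mul_ne_zero (mul_ne_zero hdj₀ hsz) (Xp_ne_zero p q _)
    have horder : (d j₀ * sig p q j₀.val (e m₀) * Xp p q (carry q j₀ m₀)).order = n₀ := by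
      rw [HahnSeries.order_mul (mul_ne_zero hdj₀ hsz) (Xp_ne_zero p q _),
        HahnSeries.order_mul hdj₀ hsz, sig_order p q _ _ hem₀, Xp_order]
    rw [← horder]
    exact HahnSeries.coeff_order_eq_zero.not.mpr hprod
  apply hcoeff
  rw [hcontra]
  show (0 : L p q).coeff n₀ = 0
  simp

instance : NoZeroDivisors (D p q) where
  eq_zero_or_eq_zero_of_mul_eq_zero {a b} h := by
    by_contra hc
    push_neg at hc
    exact D_mul_ne_zero p q hc.1 hc.2 h

noncomputable instance : IsDomain (D p q) := NoZeroDivisors.to_isDomain _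

end CDA
namespace CDA
variable (p q : ℕ) [Fact p.Prime] [NeZero q]

noncomputable instance algebraL : Algebra (Fq p) (L p q) := (fmap p q).toAlgebra

lemma L_smul_def (g : Fq p) (f : L p q) : g • f = fmap p q g * f := rfl

lemma emb_injective : Function.Injective (emb p q) := (emb p q).injective

lemma fmap_support (g : Fq p) : (fmap p q g).support = g.support := by
  ext n
  simp only [HahnSeries.mem_support, fmap, mapRH_coeff]
  constructor
  · intro h hc; exact h (by rw [hc, map_zero])
  · intro h hc; exact h (emb_injective p q (by rw [hc, map_zero]))

/-- basis of the Galois field over the prime field -/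
noncomputable def EBasis : Module.Basis (Fin q) (ZMod p) (E p q) :=
  Module.finBasisOfFinrankEq (ZMod p) (E p q) (GaloisField.finrank p (NeZero.ne q))

/-- the `k`-th coordinate linear map -/
noncomputable def phik (k : Fin q) : E p q →ₗ[ZMod p] ZMod p :=
  (Finsupp.lapply k).comp (EBasis p q).repr.toLinearMap

lemma phik_apply (k : Fin q) (x : E p q) : phik p q k x = (EBasis p q).repr x k := rfl

lemma phik_emb_mul (k : Fin q) (c : ZMod p) (x : E p q) :
    phik p q k (emb p q c * x) = c * phik p q k x := by
  have : emb p q c * x = c • x := (Algebra.smul_def c x).symm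
  rw [this, map_smul, smul_eq_mul]

/-- coordinates of a Laurent series over `E` with respect to the basis -/
noncomputable def psi (f : L p q) (k : Fin q) : Fq p where
  coeff n := phik p q k (f.coeff n)
  isPWO_support' := f.isPWO_support.mono (fun n hn => by
    simp only [Function.mem_support] at hn ⊢
    intro h0
    exact hn (by rw [h0, map_zero]))

lemma psi_coeff (f : L p q) (k : Fin q) (n : ℤ) :
    (psi p q f k).coeff n = phik p q k (f.coeff n) := rfl

lemma psi_support (f : L p q) (k : Fin q) : (psi p q f k).support ⊆ f.support :=
  fun n hn => by
    simp only [HahnSeries.mem_support, psi_coeff] at hn ⊢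
    intro h0; exact hn (by rw [h0, map_zero])

/-- inverse: assemble a Laurent series from coordinates -/
noncomputable def unpsi (v : Fin q → Fq p) : L p q :=
  ∑ k : Fin q, fmap p q (v k) * HahnSeries.single (0 : ℤ) (EBasis p q k)

lemma unpsi_coeff (v : Fin q → Fq p) (n : ℤ) :
    (unpsi p q v).coeff n = ∑ k : Fin q, emb p q ((v k).coeff n) * EBasis p q k := by
  rw [unpsi]
  refine Eq.trans (map_sum (HahnSeries.coeff.addMonoidHom n) _ Finset.univ) ?_
  refine Finset.sum_congr rfl fun k _ => ?_
  show (fmap p q (v k) * HahnSeries.single (0 : ℤ) (EBasis p q k)).coeff n = _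
  rw [HahnSeries.coeff_mul_single_zero]
  rfl

/-- `L` is isomorphic to `q` copies of `Fq` -/
noncomputable def LtoPi : L p q ≃ₗ[Fq p] (Fin q → Fq p) where
  toFun f := psi p q f
  invFun := unpsi p q
  left_inv f := by
    ext n
    rw [unpsi_coeff]
    have : ∀ k : Fin q, emb p q ((psi p q f k).coeff n) * EBasis p q k
        = (EBasis p q).repr (f.coeff n) k • EBasis p q k := by
      intro k
      rw [psi_coeff, phik_apply, Algebra.smul_def]
      rfl
    rw [Finset.sum_congr rfl fun k _ => this k]
    exact Module.Basis.sum_repr (EBasis p q) (f.coeff n)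
  right_inv v := by
    funext k
    ext n
    rw [psi_coeff, unpsi_coeff, map_sum]
    rw [Finset.sum_eq_single k]
    · rw [phik_emb_mul, phik_apply, Module.Basis.repr_self, Finsupp.single_apply]
      simp
    · intro m _ hm
      rw [phik_emb_mul, phik_apply, Module.Basis.repr_self, Finsupp.single_apply]
      simp [hm]
    · simp
  map_add' f g := by
    funext k
    ext n
    show phik p q k ((f + g).coeff n) = (psi p q f k).coeff n + (psi p q g k).coeff n
    rw [HahnSeries.coeff_add, map_add]
    rfl
  map_smul' g f := by
    funext k
    ext n
    show phik p q k ((g • f).coeff n) = ((g • psi p q f) k).coeff n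
    rw [L_smul_def]
    have hls : (fmap p q g).support ⊆ g.support := by rw [fmap_support]
    rw [HahnSeries.coeff_mul_left' g.isPWO_support hls]
    have hrs : (psi p q f k).support ⊆ f.support := psi_support p q f k
    show _ = (g * psi p q f k).coeff n
    rw [HahnSeries.coeff_mul_right' f.isPWO_support hrs]
    rw [map_sum]
    refine Finset.sum_congr rfl fun ij _ => ?_
    show phik p q k (emb p q (g.coeff ij.1) * f.coeff ij.2) = _
    rw [phik_emb_mul]
    rfl

noncomputable instance : Module.Finite (Fq p) (L p q) :=
  Module.Finite.equiv (LtoPi p q).symm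

lemma finrank_L : Module.finrank (Fq p) (L p q) = q := by
  rw [LinearEquiv.finrank_eq (LtoPi p q), Module.finrank_pi]
  simp

end CDA
namespace CDA
variable (p q : ℕ) [Fact p.Prime] [NeZero q]

lemma D_smul_def (g : Fq p) (d : D p q) : g • d = toD p q g * d := rfl

/-- `D` is isomorphic to `q` copies of `L` as an `Fq`-module -/
noncomputable def DtoPi : D p q ≃ₗ[Fq p] (ZMod q → L p q) where
  toFun d := d
  invFun d := d
  left_inv _ := rfl
  right_inv _ := rfl
  map_add' _ _ := rfl
  map_smul' g d := by
    funext k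
    show (g • d) k = g • (d k)
    rw [D_smul_def, toD_apply, single0_mul, L_smul_def]

noncomputable instance : Module.Finite (Fq p) (D p q) :=
  Module.Finite.equiv (DtoPi p q).symm

lemma finrank_D : Module.finrank (Fq p) (D p q) = q ^ 2 := by
  rw [LinearEquiv.finrank_eq (DtoPi p q), Module.finrank_pi_fintype, finrank_L]
  simp [ZMod.card q, sq]

-- fixed point lemmas in the Galois field
lemma exists_not_fixed (j : ℕ) (hj : 0 < j) (hjq : j < q) :
    ∃ x : E p q, x ^ p ^ j ≠ x := by
  have : Fintype (E p q) := Fintype.ofFinite _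
  have : DecidableEq (E p q) := Classical.decEq _
  by_contra hall
  push_neg at hall
  have hp2 : 1 < p := (Fact.out : p.Prime).one_lt
  have hpj : 1 < p ^ j := Nat.one_lt_pow hj.ne' hp2
  set P : Polynomial (E p q) := Polynomial.X ^ p ^ j - Polynomial.X with hP
  have hdeg : P.natDegree = p ^ j := FiniteField.X_pow_card_sub_X_natDegree_eq (E p q) hpj
  have hP0 : P ≠ 0 := fun h => by simp [h] at hdeg; omega
  have hsub : Finset.univ ⊆ P.roots.toFinset := by
    intro x _
    rw [Multiset.mem_toFinset, Polynomial.mem_roots hP0]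
    simp [hP, sub_eq_zero, hall x]
  have hcard := Finset.card_le_card hsub
  rw [Finset.card_univ] at hcard
  have h1 : P.roots.toFinset.card ≤ P.roots.card := Multiset.toFinset_card_le _
  have h2 : P.roots.card ≤ P.natDegree := Polynomial.card_roots' P
  have hcardE : Fintype.card (E p q) = p ^ q := by
    rw [← Nat.card_eq_fintype_card]; exact GaloisField.card p q (NeZero.ne q)
  have hlt : p ^ j < p ^ q := Nat.pow_lt_pow_right hp2 hjq
  omega

lemma fixed_mem_range {x : E p q} (hx : x ^ p = x) : ∃ c : ZMod p, emb p q c = x := by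
  have : Fintype (E p q) := Fintype.ofFinite _
  have : DecidableEq (E p q) := Classical.decEq _
  have hp2 : 1 < p := (Fact.out : p.Prime).one_lt
  set Q : Polynomial (E p q) := Polynomial.X ^ p - Polynomial.X with hQ
  have hdeg : Q.natDegree = p := by
    have := FiniteField.X_pow_card_sub_X_natDegree_eq (E p q) hp2
    simpa [hQ] using this
  have hQ0 : Q ≠ 0 := fun h => by simp [h] at hdeg; omega
  set A : Finset (E p q) := Finset.univ.image (emb p q) with hA
  have hAcard : A.card = p := by
    rw [hA, Finset.card_image_of_injective _ (emb_injective p q), Finset.card_univ, ZMod.card]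
  have hsubA : A ⊆ Q.roots.toFinset := by
    intro y hy
    rw [hA, Finset.mem_image] at hy
    obtain ⟨c, _, rfl⟩ := hy
    rw [Multiset.mem_toFinset, Polynomial.mem_roots hQ0]
    simp only [hQ, Polynomial.IsRoot, Polynomial.eval_sub, Polynomial.eval_pow, Polynomial.eval_X]
    rw [← map_pow, ZMod.pow_card, sub_self]
  have h1 : Q.roots.toFinset.card ≤ Q.roots.card := Multiset.toFinset_card_le _
  have h2 : Q.roots.card ≤ Q.natDegree := Polynomial.card_roots' Q
  have hEq : A = Q.roots.toFinset :=
    Finset.eq_of_subset_of_card_le hsubA (by omega)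
  have hxmem : x ∈ Q.roots.toFinset := by
    rw [Multiset.mem_toFinset, Polynomial.mem_roots hQ0]
    simp [hQ, sub_eq_zero, hx]
  rw [← hEq, hA, Finset.mem_image] at hxmem
  obtain ⟨c, _, hc⟩ := hxmem
  exact ⟨c, hc⟩

end CDA
namespace CDA
variable (p q : ℕ) [Fact p.Prime] [NeZero q]

lemma sig_single0 (j : ℕ) (g : E p q) :
    sig p q j (HahnSeries.single (0 : ℤ) g) = HahnSeries.single (0 : ℤ) (tau p q j g) := by
  ext n
  simp only [sig, mapRH_coeff, HahnSeries.coeff_single]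
  split <;> simp

lemma sing_mul_apply (j : ZMod q) (a : L p q) (d : D p q) (k : ZMod q) :
    (sing p q j a * d) k = a * sig p q j.val (d (k - j)) * Xp p q (carry q j (k - j)) := by
  rw [mul_apply, Finset.sum_eq_single j]
  · rw [sing_apply]; simp
  · intro i _ hi; rw [sing_apply]; simp [hi]
  · simp

lemma mul_sing_apply (j : ZMod q) (a : L p q) (d : D p q) (k : ZMod q) :
    (d * sing p q j a) k
      = d (k - j) * sig p q (k - j).val a * Xp p q (carry q (k - j) j) := by
  rw [mul_apply, Finset.sum_eq_single (k - j)]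
  · rw [show k - (k - j) = j by ring, sing_apply]; simp
  · intro i _ hi
    have : k - i ≠ j := fun h => hi (by rw [← h]; ring)
    rw [sing_apply]; simp [this]
  · simp

lemma single_sub0 (a b : E p q) :
    HahnSeries.single (0:ℤ) a - HahnSeries.single (0:ℤ) b = HahnSeries.single (0:ℤ) (a - b) := by
  ext n
  rw [HahnSeries.coeff_sub]
  simp only [HahnSeries.coeff_single]
  split <;> simp

theorem center_D : Subalgebra.center (Fq p) (D p q) = ⊥ := by
  apply le_antisymm _ bot_le
  intro d hd
  rw [Algebra.mem_bot]
  have hcomm : ∀ g : D p q, g * d = d * g := fun g =>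
    Subalgebra.mem_center_iff.mp hd g
  -- step 1 : off-diagonal components vanish
  have hoff : ∀ k : ZMod q, k ≠ 0 → d k = 0 := by
    intro k hk
    have hkv0 : 0 < k.val := ZMod.val_pos.mpr hk
    obtain ⟨g, hg⟩ := exists_not_fixed p q k.val hkv0 (ZMod.val_lt k)
    have h := congrFun (hcomm (sing p q 0 (HahnSeries.single (0:ℤ) g))) k
    rw [sing_mul_apply, mul_sing_apply, sub_zero, carry_zero_left, carry_zero_right] at h
    have hXp1 : Xp p q 0 = 1 := by
      rw [Xp, Nat.cast_zero]; exact HahnSeries.single_zero_one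
    rw [hXp1, mul_one, mul_one, ZMod.val_zero, sig_zero, sig_single0] at h
    have hzero : d k * (HahnSeries.single (0:ℤ) (tau p q k.val g)
        - HahnSeries.single (0:ℤ) g) = 0 := by
      rw [mul_sub, ← h, mul_comm, sub_self]
    have hne : HahnSeries.single (0:ℤ) (tau p q k.val g)
        - HahnSeries.single (0:ℤ) g ≠ 0 := by
      rw [single_sub0]
      exact HahnSeries.single_ne_zero (sub_ne_zero.mpr (by rw [tau_def]; exact hg))
    exact (mul_eq_zero.mp hzero).resolve_right hne
  -- step 2 : diagonal component is fixed by sigma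
  have hfix : sig p q 1 (d 0) = d 0 := by
    have h := congrFun (hcomm (sing p q 1 1)) 1
    rw [sing_mul_apply, mul_sing_apply, sub_self, ZMod.val_zero, sig_zero] at h
    rw [carry_comm] at h
    have hXne : Xp p q (carry q 0 1) ≠ 0 := Xp_ne_zero p q _
    have h2 : sig p q (1 : ZMod q).val (d 0) = d 0 := by
      have h3 : sig p q (1 : ZMod q).val (d 0) * Xp p q (carry q 0 1)
          = d 0 * Xp p q (carry q 0 1) := by
        have := h
        rw [one_mul, mul_one] at this
        exact this
      exact mul_right_cancel₀ hXne h3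
    rcases eq_or_ne q 1 with hq1 | hq1
    · have h4 : sig p q (0 + q * 1) (d 0) = sig p q 0 (d 0) :=
        sig_add_mul_q p q 0 1 (NeZero.ne q) (d 0)
      rw [sig_zero] at h4
      rw [show (1 : ℕ) = 0 + q * 1 by omega]
      exact h4
    · have hq2 : 1 < q := by
        have := NeZero.ne q; omega
      have hv1 : (1 : ZMod q).val = 1 := by
        rw [ZMod.val_one_eq_one_mod]
        exact Nat.mod_eq_of_lt hq2
      rw [hv1] at h2
      exact h2
  -- step 3 : the diagonal component comes from Fq
  have hcoeffs : ∀ n : ℤ, ∃ c : ZMod p, emb p q c = (d 0).coeff n := by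
    intro n
    apply fixed_mem_range
    have h5 := congrArg (fun x => HahnSeries.coeff x n) hfix
    simp only [sig, mapRH_coeff, tau_def, pow_one] at h5
    exact h5
  set f : Fq p := {
    coeff := fun n => (hcoeffs n).choose
    isPWO_support' := (d 0).isPWO_support.mono (fun n hn => by
      simp only [Function.mem_support] at hn ⊢
      intro h0
      exact hn (emb_injective p q (by rw [(hcoeffs n).choose_spec, h0, map_zero]))) } with hf
  refine ⟨f, ?_⟩
  have hf0 : fmap p q f = d 0 := by
    ext n
    show emb p q ((hcoeffs n).choose) = (d 0).coeff n
    exact (hcoeffs n).choose_spec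
  rw [algebraMap_D_apply, hf0]
  funext k
  rw [sing_apply]
  rcases eq_or_ne k 0 with rfl | hk
  · simp
  · simp [hk, hoff k hk]

end CDA
/-- A witness that there is a division algebra over the field `F` which is central over `F`
(its center is exactly the image of `F`) and of dimension `n` over `F`. -/
structure CentralDivisionAlgebraOver (F : Type) [Field F] (n : ℕ) where
  /-- The underlying type of the division algebra. -/
  carrier : Type
  /-- The division ring structure. -/
  [instDivisionRing : DivisionRing carrier]
  /-- The `F`-algebra structure. -/
  [instAlgebra : Algebra F carrier]
  /-- The center of the algebra is exactly (the image of) `F`. -/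
  center_eq : Subalgebra.center F carrier = ⊥
  /-- The dimension over `F` is `n`. -/
  finrank_eq : Module.finrank F carrier = n

/-- Let `q` and `p` be primes with `q ∣ p − 1`. Then there is a division algebra over the
field `𝔽_p((X))` of formal Laurent series over `𝔽_p`, central over `𝔽_p((X))` and of
dimension `q²` over it. -/
theorem exists_central_division_algebra_laurent
    (p q : ℕ) [hp : Fact p.Prime] (hq : q.Prime) (hdvd : q ∣ p - 1) :
    Nonempty (CentralDivisionAlgebraOver (LaurentSeries (ZMod p)) (q ^ 2)) := by
  letI : NeZero q := ⟨hq.ne_zero⟩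
  letI dr : DivisionRing (CDA.D p q) :=
    divisionRingOfFiniteDimensional (CDA.Fq p) (CDA.D p q)
  exact ⟨{ carrier := CDA.D p q
           instDivisionRing := dr
           instAlgebra := CDA.algebraD p q
           center_eq := CDA.center_D p q
           finrank_eq := CDA.finrank_D p q }⟩
end
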